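/- arXiv:1502.03146 — 5 statements merged into one kernel-verified Lean document; each statement's English description precedes it below -/
import Mathlib

section
/- If G is a finite simple graph on n vertices and k a positive integer with f(G) < k, then there exist sets V_1, ..., V_n ⊆ V(G), each of size at most k, such that every edge of G is contained in the subgraph induced by some V_i, i.e., E(G) ⊆ ∪_{i=1}^n E(G[V_i]). -/
open SimpleGraph

variable {V : Type*} [Fintype V]

/-- An edge-ordering of `G`: a bijection from the edge set onto `{1, ..., |E(G)|}`. -/
def IsEdgeOrdering (G : SimpleGraph V) (φ : Sym2 V → ℕ) : Prop :=
  Set.BijOn φ G.edgeSet (Set.Icc 1 G.edgeSet.ncard)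

/-- `G` has an increasing path of length `ℓ` with respect to the labelling `φ`. -/
def HasIncPath (G : SimpleGraph V) (φ : Sym2 V → ℕ) (ℓ : ℕ) : Prop :=
  ∃ (u v : V) (p : G.Walk u v), p.IsPath ∧ List.Chain' (· < ·) (p.edges.map φ) ∧ p.length = ℓ

/-- `ψ(G, φ)`: the length of the longest increasing path under `φ`. -/
noncomputable def psi (G : SimpleGraph V) (φ : Sym2 V → ℕ) : ℕ :=
  sSup {ℓ | HasIncPath G φ ℓ}

/-- `f(G)`: the minimum over all edge-orderings of the longest increasing path length. -/
noncomputable def incf (G : SimpleGraph V) : ℕ :=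
  sInf {m | ∃ φ : Sym2 V → ℕ, IsEdgeOrdering G φ ∧ psi G φ = m}

set_option linter.unusedSectionVars false

/-- Every edge of a simple graph has a representation by an ordered pair of adjacent
vertices. -/
lemma edge_rep {G : SimpleGraph V} :
    ∀ e ∈ G.edgeSet, ∃ a b, G.Adj a b ∧ e = s(a, b) := by
  intro e
  induction e using Sym2.ind with
  | _ a b => intro he; exact ⟨a, b, he, rfl⟩

/-- Every finite simple graph admits an edge ordering. -/
lemma exists_edge_ordering (G : SimpleGraph V) : ∃ φ : Sym2 V → ℕ, IsEdgeOrdering G φ := by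
  classical
  have hfin : G.edgeSet.Finite := Set.toFinite _
  set n := G.edgeSet.ncard with hn
  set F : Finset (Sym2 V) := hfin.toFinset with hF
  have hcard : F.card = n := by
    rw [hF, hn, Set.ncard_eq_toFinset_card _ hfin]
  have heq : Fintype.card F = Fintype.card (Finset.Icc 1 n) := by
    rw [Fintype.card_coe, Fintype.card_coe, hcard, Nat.card_Icc]
    omega
  let eqv := Fintype.equivOfCardEq heq
  refine ⟨fun e => if h : e ∈ F then ((eqv ⟨e, h⟩ : (Finset.Icc 1 n)) : ℕ) else 0,
    ?_, ?_, ?_⟩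
  · intro e he
    have hmem : e ∈ F := hfin.mem_toFinset.mpr he
    beta_reduce
    rw [dif_pos hmem]
    have := (eqv ⟨e, hmem⟩).2
    rw [Finset.mem_Icc] at this
    exact Set.mem_Icc.mpr this
  · intro e he f hf hef
    have hme : e ∈ F := hfin.mem_toFinset.mpr he
    have hmf : f ∈ F := hfin.mem_toFinset.mpr hf
    beta_reduce at hef
    rw [dif_pos hme, dif_pos hmf] at hef
    have := eqv.injective (Subtype.coe_injective hef)
    exact congrArg Subtype.val this
  · intro y hy
    have hy' : y ∈ Finset.Icc 1 n := Finset.mem_Icc.mpr (Set.mem_Icc.mp hy)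
    refine ⟨(eqv.symm ⟨y, hy'⟩).1, hfin.mem_toFinset.mp (eqv.symm ⟨y, hy'⟩).2, ?_⟩
    beta_reduce
    rw [dif_pos (eqv.symm ⟨y, hy'⟩).2]
    simp only [Subtype.coe_eta, Equiv.apply_symm_apply]

/-- The key covering construction: processing the edges in increasing label order, we
maintain, for each vertex `x`, an increasing path ending at `x`; when an uncovered edge
appears, the two endpoint paths are extended crosswise. -/
lemma cover_aux [DecidableEq V] (G : SimpleGraph V) (φ : Sym2 V → ℕ)
    (hφ : IsEdgeOrdering G φ) (t : ℕ) :
    ∃ S : V → Finset V,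
      (∀ x : V, ∃ (u : V) (w : G.Walk u x), w.IsPath ∧
          List.Chain' (· < ·) (w.edges.map φ) ∧
          (∀ e ∈ w.edges, e ∈ G.edgeSet ∧ φ e ≤ t) ∧ S x = w.support.toFinset) ∧
      ∀ e ∈ G.edgeSet, φ e ≤ t → ∃ x, ∀ v ∈ e, v ∈ S x := by
  classical
  induction t with
  | zero =>
    refine ⟨fun x => {x}, fun x => ⟨x, SimpleGraph.Walk.nil, SimpleGraph.Walk.IsPath.nil,
      List.isChain_nil, by simp, by simp⟩, ?_⟩
    intro e he hle
    have h1 : 1 ≤ φ e := (Set.mem_Icc.mp (hφ.1 he)).1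
    omega
  | succ t ih =>
    obtain ⟨S, hS, hcov⟩ := ih
    by_cases he : ∃ e ∈ G.edgeSet, φ e = t + 1
    · obtain ⟨e₀, he₀, hl₀⟩ := he
      obtain ⟨a, b, hab, rfl⟩ := edge_rep e₀ he₀
      have hba : b ≠ a := hab.ne'
      by_cases hc : ∃ x, a ∈ S x ∧ b ∈ S x
      · refine ⟨S, ?_, ?_⟩
        · intro x
          obtain ⟨u, w, hw, hch, hed, hSx⟩ := hS x
          exact ⟨u, w, hw, hch, fun e heh => ⟨(hed e heh).1, (hed e heh).2.trans (by omega)⟩, hSx⟩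
        · intro e hee hle
          have hsplit : φ e ≤ t ∨ φ e = t + 1 := by omega
          rcases hsplit with h | h
          · exact hcov e hee h
          · have heq : e = s(a, b) := hφ.2.1 hee he₀ (by rw [h, hl₀])
            obtain ⟨x, hxa, hxb⟩ := hc
            refine ⟨x, ?_⟩
            intro v hv
            rw [heq, Sym2.mem_iff] at hv
            rcases hv with rfl | rfl
            · exact hxa
            · exact hxb
      · set S' : V → Finset V :=
          fun x => if x = a then insert a (S b) else if x = b then insert b (S a) else S x
          with hS'def
        have hS'a : S' a = insert a (S b) := by simp [hS'def]
        have hS'b : S' b = insert b (S a) := by simp [hS'def, hba]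
        have hS'x : ∀ x, x ≠ a → x ≠ b → S' x = S x := by
          intro x h1 h2; simp [hS'def, h1, h2]
        -- endpoints belong to their own sets
        have hself : ∀ x, x ∈ S x := by
          intro x
          obtain ⟨u, w, hw, hch, hed, hSx⟩ := hS x
          rw [hSx]
          exact List.mem_toFinset.mpr w.end_mem_support
        refine ⟨S', ?_, ?_⟩
        · intro x
          rcases eq_or_ne x a with rfl | hxa
          · obtain ⟨u, w, hw, hch, hed, hSb⟩ := hS b
            have hanb : x ∉ S b := fun hh => hc ⟨b, hh, hself b⟩
            have hans : x ∉ w.support := fun hh => hanb (hSb ▸ List.mem_toFinset.mpr hh)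
            refine ⟨u, w.concat hab.symm, ?_, ?_, ?_, ?_⟩
            · apply SimpleGraph.Walk.IsPath.mk'
              rw [SimpleGraph.Walk.support_concat]
              refine List.Nodup.append hw.support_nodup (by simp) ?_
              intro y hy hz
              simp only [List.mem_singleton] at hz
              subst hz
              exact hans hy
            · rw [SimpleGraph.Walk.edges_concat, List.concat_eq_append, List.map_append,
                List.Chain', List.isChain_append]
              refine ⟨hch, by simp, ?_⟩
              intro p hp q hq
              simp only [List.map_cons, List.map_nil, List.head?_cons, Option.mem_some_iff] at hq
              subst hq
              have hpmem : p ∈ w.edges.map φ := List.mem_of_mem_getLast? hp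
              obtain ⟨e', he', rfl⟩ := List.mem_map.mp hpmem
              have hle' := (hed e' he').2
              have hswap : s(b, x) = s(x, b) := Sym2.eq_swap
              rw [hswap, hl₀]
              omega
            · intro e heh
              rw [SimpleGraph.Walk.edges_concat, List.concat_eq_append, List.mem_append] at heh
              rcases heh with heh | heh
              · exact ⟨(hed e heh).1, (hed e heh).2.trans (by omega)⟩
              · simp only [List.mem_singleton] at heh
                subst heh
                rw [Sym2.eq_swap]
                exact ⟨he₀, le_of_eq hl₀⟩
            · rw [hS'a, hSb, SimpleGraph.Walk.support_concat]
              ext y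
              simp [or_comm]
          · rcases eq_or_ne x b with rfl | hxb
            · obtain ⟨u, w, hw, hch, hed, hSa⟩ := hS a
              have hbna : x ∉ S a := fun hh => hc ⟨a, hself a, hh⟩
              have hbns : x ∉ w.support := fun hh => hbna (hSa ▸ List.mem_toFinset.mpr hh)
              refine ⟨u, w.concat hab, ?_, ?_, ?_, ?_⟩
              · apply SimpleGraph.Walk.IsPath.mk'
                rw [SimpleGraph.Walk.support_concat]
                refine List.Nodup.append hw.support_nodup (by simp) ?_
                intro y hy hz
                simp only [List.mem_singleton] at hz
                subst hz
                exact hbns hy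
              · rw [SimpleGraph.Walk.edges_concat, List.concat_eq_append, List.map_append,
                  List.Chain', List.isChain_append]
                refine ⟨hch, by simp, ?_⟩
                intro p hp q hq
                simp only [List.map_cons, List.map_nil, List.head?_cons, Option.mem_some_iff] at hq
                subst hq
                have hpmem : p ∈ w.edges.map φ := List.mem_of_mem_getLast? hp
                obtain ⟨e', he', rfl⟩ := List.mem_map.mp hpmem
                have hle' := (hed e' he').2
                rw [hl₀]
                omega
              · intro e heh
                rw [SimpleGraph.Walk.edges_concat, List.concat_eq_append, List.mem_append] at heh
                rcases heh with heh | heh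
                · exact ⟨(hed e heh).1, (hed e heh).2.trans (by omega)⟩
                · simp only [List.mem_singleton] at heh
                  subst heh
                  exact ⟨he₀, le_of_eq hl₀⟩
              · rw [hS'b, hSa, SimpleGraph.Walk.support_concat]
                ext y
                simp [or_comm]
            · obtain ⟨u, w, hw, hch, hed, hSx⟩ := hS x
              refine ⟨u, w, hw, hch,
                fun e heh => ⟨(hed e heh).1, (hed e heh).2.trans (by omega)⟩, ?_⟩
              rw [hS'x x hxa hxb]
              exact hSx
        · intro e hee hle
          have hsplit : φ e ≤ t ∨ φ e = t + 1 := by omega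
          rcases hsplit with h | h
          · obtain ⟨x, hx⟩ := hcov e hee h
            rcases eq_or_ne x a with rfl | hxa
            · refine ⟨b, ?_⟩
              intro v hv
              rw [hS'b]
              exact Finset.mem_insert_of_mem (hx v hv)
            · rcases eq_or_ne x b with rfl | hxb
              · refine ⟨a, ?_⟩
                intro v hv
                rw [hS'a]
                exact Finset.mem_insert_of_mem (hx v hv)
              · refine ⟨x, ?_⟩
                intro v hv
                rw [hS'x x hxa hxb]
                exact hx v hv
          · have heq : e = s(a, b) := hφ.2.1 hee he₀ (by rw [h, hl₀])
            refine ⟨a, ?_⟩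
            intro v hv
            rw [heq, Sym2.mem_iff] at hv
            rw [hS'a]
            rcases hv with rfl | rfl
            · exact Finset.mem_insert_self _ _
            · exact Finset.mem_insert_of_mem (hself v)
    · refine ⟨S, ?_, ?_⟩
      · intro x
        obtain ⟨u, w, hw, hch, hed, hSx⟩ := hS x
        exact ⟨u, w, hw, hch, fun e heh => ⟨(hed e heh).1, (hed e heh).2.trans (by omega)⟩, hSx⟩
      · intro e hee hle
        have hne : φ e ≠ t + 1 := fun hh => he ⟨e, hee, hh⟩
        exact hcov e hee (by omega)

/-- If `f(G) < k` then there are `n = |V(G)|` vertex sets, each of size at most `k`,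
whose induced subgraphs cover all edges of `G`. -/
theorem exists_cover_of_incf_lt (G : SimpleGraph V) (k : ℕ) (hk : 0 < k)
    (h : incf G < k) :
    ∃ Vs : Fin (Fintype.card V) → Finset V,
      (∀ i, (Vs i).card ≤ k) ∧ ∀ e ∈ G.edgeSet, ∃ i, ∀ v ∈ e, v ∈ Vs i := by
  classical
  obtain ⟨ψ₀, hψ₀⟩ := exists_edge_ordering G
  have hne : {m | ∃ φ : Sym2 V → ℕ, IsEdgeOrdering G φ ∧ psi G φ = m}.Nonempty :=
    ⟨psi G ψ₀, ψ₀, hψ₀, rfl⟩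
  obtain ⟨φ, hφ, hpsi⟩ : ∃ φ : Sym2 V → ℕ, IsEdgeOrdering G φ ∧ psi G φ = incf G :=
    Nat.sInf_mem hne
  obtain ⟨S, hS, hcov⟩ := cover_aux G φ hφ G.edgeSet.ncard
  have hbdd : BddAbove {ℓ | HasIncPath G φ ℓ} := by
    refine ⟨Fintype.card V, ?_⟩
    rintro ℓ ⟨u, v, p, hp, -, hlen⟩
    rw [← hlen]
    exact le_of_lt hp.length_lt
  refine ⟨fun i => S ((Fintype.equivFin V).symm i), ?_, ?_⟩
  · intro i
    obtain ⟨u, w, hw, hch, -, hEq⟩ := hS ((Fintype.equivFin V).symm i)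
    have hmem : w.length ∈ {ℓ | HasIncPath G φ ℓ} := ⟨u, _, w, hw, hch, rfl⟩
    have hlen : w.length ≤ psi G φ := le_csSup hbdd hmem
    have hlt : w.length + 1 ≤ k := by
      rw [hpsi] at hlen
      omega
    calc (S ((Fintype.equivFin V).symm i)).card
        = w.support.toFinset.card := by rw [hEq]
      _ ≤ w.support.length := List.toFinset_card_le _
      _ = w.length + 1 := w.length_support
      _ ≤ k := hlt
  · intro e he
    have hle : φ e ≤ G.edgeSet.ncard := (Set.mem_Icc.mp (hφ.1 he)).2
    obtain ⟨x, hx⟩ := hcov e he hle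
    refine ⟨Fintype.equivFin V x, ?_⟩
    intro v hv
    simpa using hx v hv
end

section
/- For any finite simple graph G with average degree d, f(G) ≥ √d; that is, every edge-ordering of G contains an increasing path of length at least √d. -/
open SimpleGraph

variable {V : Type*} [Fintype V]

set_option linter.unusedSectionVars false

namespace IncAux

variable (G : SimpleGraph V) (φ : Sym2 V → ℕ)

/-- There is a decreasing (in labels) path starting at `v` whose first edge goes to `u`,
of length `ℓ`.  This is the reverse of an increasing path ending at `v` with last edge
`{u,v}`. -/
def DW (u v : V) (ℓ : ℕ) : Prop :=
  ∃ (t : V) (h : G.Adj v u) (q : G.Walk u t),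
    (Walk.cons h q).IsPath ∧ List.Chain' (· > ·) ((Walk.cons h q).edges.map φ) ∧
      (Walk.cons h q).length = ℓ

/-- Length of the longest increasing path ending at `v` whose last edge is `{u,v}`. -/
noncomputable def xv (u v : V) : ℕ := sSup {ℓ | DW G φ u v ℓ}

/-- Weight assigned to the direction `u → v` of the edge `{u,v}`. -/
noncomputable def wt (u v : V) : ℕ :=
  if xv G φ v u < xv G φ u v then 2 else if xv G φ u v < xv G φ v u then 0 else 1

lemma dw_bddAbove (u v : V) : BddAbove {ℓ | DW G φ u v ℓ} := by
  refine ⟨Fintype.card V, ?_⟩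
  rintro ℓ ⟨t, h, q, hp, -, hlen⟩
  exact le_of_lt (hlen ▸ hp.length_lt)

lemma dw_one {u v : V} (h : G.Adj v u) : DW G φ u v 1 := by
  refine ⟨u, h, Walk.nil, ?_, ?_, rfl⟩
  · rw [Walk.cons_isPath_iff]
    exact ⟨Walk.IsPath.nil, by simp [h.ne]⟩
  · exact List.isChain_singleton _

lemma one_le_xv {u v : V} (h : G.Adj v u) : 1 ≤ xv G φ u v :=
  le_csSup (dw_bddAbove G φ u v) (by exact dw_one G φ h)

lemma le_xv_of_dw {u v : V} {ℓ : ℕ} (h : DW G φ u v ℓ) : ℓ ≤ xv G φ u v :=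
  le_csSup (dw_bddAbove G φ u v) (by exact h)

lemma xv_spec {u v : V} (h : G.Adj v u) : DW G φ u v (xv G φ u v) :=
  Nat.sSup_mem ⟨1, by exact dw_one G φ h⟩ (dw_bddAbove G φ u v)

lemma hasIncPath_of_dw {u v : V} {ℓ : ℕ} (h : DW G φ u v ℓ) : HasIncPath G φ ℓ := by
  obtain ⟨t, h, q, hp, hc, hlen⟩ := h
  refine ⟨t, v, (Walk.cons h q).reverse, hp.reverse, ?_, by rw [Walk.length_reverse]; exact hlen⟩
  rw [Walk.edges_reverse, List.map_reverse]
  refine List.isChain_reverse.mpr ?_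
  exact hc

lemma psi_bddAbove : BddAbove {ℓ | HasIncPath G φ ℓ} := by
  refine ⟨Fintype.card V, ?_⟩
  rintro ℓ ⟨u, v, p, hp, -, hlen⟩
  exact le_of_lt (hlen ▸ hp.length_lt)

lemma xv_le_psi {u v : V} (h : G.Adj v u) : xv G φ u v ≤ psi G φ := by
  refine csSup_le ⟨1, dw_one G φ h⟩ ?_
  intro ℓ hℓ
  exact le_csSup (psi_bddAbove G φ) (hasIncPath_of_dw G φ hℓ)

lemma wt_le_two (u v : V) : wt G φ u v ≤ 2 := by
  unfold wt; split_ifs <;> omega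

lemma wt_add_wt (u v : V) : wt G φ u v + wt G φ v u = 2 := by
  unfold wt
  split_ifs <;> omega

/-- The endpoint of a walk of positive length is in the tail of the support. -/
lemma end_mem_support_tail {a b : V} (p : G.Walk a b) (hp : p.length ≠ 0) :
    b ∈ p.support.tail := by
  cases p with
  | nil => simp at hp
  | cons h q => simpa using q.end_mem_support

/-- Extension surgery: if `u' ∉ D.support` and the edge `{u',v}` has larger label than all
edges of the decreasing walk `D` starting at `v`, we can prepend it. -/
lemma dw_extend {v u₁ u' t : V} (h' : G.Adj v u') (h : G.Adj v u₁) (q : G.Walk u₁ t)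
    (hp : (Walk.cons h q).IsPath)
    (hc : List.Chain' (· > ·) ((Walk.cons h q).edges.map φ))
    (hu' : u' ∉ (Walk.cons h q).support)
    (hgt : φ s(v, u₁) < φ s(u', v)) :
    DW G φ v u' ((Walk.cons h q).length + 1) := by
  refine ⟨t, h'.symm, Walk.cons h q, ?_, ?_, rfl⟩
  · rw [Walk.cons_isPath_iff]; exact ⟨hp, hu'⟩
  · rw [Walk.edges_cons, List.map_cons]
    rw [Walk.edges_cons, List.map_cons] at hc ⊢
    exact List.isChain_cons_cons.mpr ⟨hgt, hc⟩

/-- Endpoint surgery: drop the last vertex of the decreasing walk `D` and prepend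
the edge `{z,v}` instead. -/
lemma dw_last {v u₁ z : V} (h : G.Adj v u₁) (q : G.Walk u₁ z)
    (hp : (Walk.cons h q).IsPath)
    (hc : List.Chain' (· > ·) ((Walk.cons h q).edges.map φ))
    (h' : G.Adj v z)
    (hgt : φ s(v, u₁) < φ s(z, v)) :
    DW G φ v z ((Walk.cons h q).length) := by
  set D : G.Walk v z := Walk.cons h q with hD
  obtain ⟨w, h₂, R, hR⟩ := Walk.exists_eq_cons_of_ne h'.ne' D.reverse
  have hRrevpath : R.reverse.IsPath := by
    have := hp.reverse
    rw [hR, Walk.cons_isPath_iff] at this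
    exact this.1.reverse
  have hznotin : z ∉ R.reverse.support := by
    have := hp.reverse
    rw [hR, Walk.cons_isPath_iff] at this
    intro hmem
    rw [Walk.support_reverse, List.mem_reverse] at hmem
    exact this.2 hmem
  -- edges of R.reverse form the dropLast of D.edges
  have hDe : D.edges = R.edges.reverse ++ [s(z, w)] := by
    have h1 : D.edges.reverse = s(z, w) :: R.edges := by
      rw [← Walk.edges_reverse, hR, Walk.edges_cons]
    have := congrArg List.reverse h1
    rwa [List.reverse_reverse, List.reverse_cons] at this
  have hpw : List.Pairwise (· > ·) (D.edges.map φ) := List.isChain_iff_pairwise.mp hc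
  have hsub : (R.reverse.edges.map φ).Sublist (D.edges.map φ) := by
    rw [Walk.edges_reverse, hDe]
    exact (List.sublist_append_left _ _).map φ
  have hhead : ∀ b ∈ D.edges.map φ, b ≤ φ s(v, u₁) := by
    intro b hb
    rw [hD, Walk.edges_cons, List.map_cons] at hb
    rcases List.mem_cons.mp hb with hb | hb
    · exact le_of_eq hb
    · rw [hD, Walk.edges_cons, List.map_cons] at hpw
      exact le_of_lt ((List.pairwise_cons.mp hpw).1 b hb)
  refine ⟨w, h'.symm, R.reverse, ?_, ?_, ?_⟩
  · rw [Walk.cons_isPath_iff]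
    exact ⟨hRrevpath, hznotin⟩
  · rw [Walk.edges_cons, List.map_cons]
    refine List.isChain_iff_pairwise.mpr ?_
    rw [List.pairwise_cons]
    constructor
    · intro b hb
      exact lt_of_le_of_lt (hhead b (hsub.mem hb)) hgt
    · exact hpw.sublist hsub
  · have hlenR : R.length + 1 = D.length := by
      have := congrArg Walk.length hR
      rw [Walk.length_reverse] at this
      simpa using this.symm
    simp [hlenR, Walk.length_reverse]

/-- The crucial fiber bound: the total weight of edges entering `v` whose `xv`-value is `s`
is at most `2*s - 1`. -/
lemma fiber [DecidableRel G.Adj] (hinj : Set.InjOn φ G.edgeSet) (v : V) (s : ℕ) (hs : 1 ≤ s) :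
    ∑ u ∈ (G.neighborFinset v).filter (fun u => xv G φ u v = s), wt G φ u v ≤ 2 * s - 1 := by
  classical
  set A := (G.neighborFinset v).filter (fun u => xv G φ u v = s) with hA
  set F := A.filter (fun u => wt G φ u v ≠ 0) with hF
  have hsplit : ∑ u ∈ F, wt G φ u v = ∑ u ∈ A, wt G φ u v := Finset.sum_filter_ne_zero A
  rw [← hsplit]
  rcases F.eq_empty_or_nonempty with hFe | hFne
  · rw [hFe]; simp only [Finset.sum_empty]; omega
  obtain ⟨u₁, hu₁F, hmin⟩ := F.exists_min_image (fun u => φ s(u, v)) hFne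
  have hFfacts : ∀ u' ∈ F, G.Adj v u' ∧ xv G φ u' v = s ∧ xv G φ v u' ≤ s := by
    intro u' hu'
    rw [hF, Finset.mem_filter, hA, Finset.mem_filter, mem_neighborFinset] at hu'
    obtain ⟨⟨hadj, hxv⟩, hw⟩ := hu'
    refine ⟨hadj, hxv, ?_⟩
    unfold wt at hw
    split_ifs at hw with h1 h2
    · omega
    · exact absurd rfl hw
    · omega
  obtain ⟨hadj₁, hx₁, hle₁⟩ := hFfacts u₁ hu₁F
  obtain ⟨z, h, q, hp, hc, hlen⟩ := xv_spec G φ hadj₁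
  rw [hx₁] at hlen
  have hglt : ∀ u' ∈ F, u' ≠ u₁ → φ s(u₁, v) < φ s(u', v) := by
    intro u' hu' hne
    refine lt_of_le_of_ne (hmin u' hu') ?_
    intro heq
    have hadj' := (hFfacts u' hu').1
    have he : s(u₁, v) = s(u', v) := hinj (by rw [mem_edgeSet]; exact hadj₁.symm)
      (by rw [mem_edgeSet]; exact hadj'.symm) heq
    rcases Sym2.eq_iff.mp he with ⟨h1, -⟩ | ⟨h1, h2⟩
    · exact hne h1.symm
    · exact hadj₁.ne h1.symm
  have hmem : ∀ u' ∈ F, u' ≠ u₁ → u' ∈ q.support.tail := by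
    intro u' hu' hne
    obtain ⟨hadj', hx', hle'⟩ := hFfacts u' hu'
    by_contra hnot
    have hnotin : u' ∉ (Walk.cons h q).support := by
      rw [Walk.support_cons]
      intro hin
      rcases List.mem_cons.mp hin with h1 | h1
      · exact hadj'.ne h1.symm
      · rw [Walk.support_eq_cons] at h1
        rcases List.mem_cons.mp h1 with h2 | h2
        · exact hne h2
        · exact hnot h2
    have hgtlab : φ s(v, u₁) < φ s(u', v) := by
      rw [Sym2.eq_swap (a := v) (b := u₁)]
      exact hglt u' hu' hne
    have hext := le_xv_of_dw G φ (dw_extend G φ hadj' h q hp hc hnotin hgtlab)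
    rw [hlen] at hext
    omega
  by_cases hs1 : s = 1
  · subst hs1
    have hq0 : q.length = 0 := by
      have : q.length + 1 = 1 := hlen
      omega
    have htail_nil : q.support.tail = [] := by
      have hlt : q.support.tail.length = 0 := by
        rw [List.length_tail, q.length_support, hq0]
      exact List.eq_nil_of_length_eq_zero hlt
    have hFsub : F = {u₁} := by
      apply Finset.eq_singleton_iff_unique_mem.mpr
      refine ⟨hu₁F, ?_⟩
      intro u' hu'
      by_contra hne
      have := hmem u' hu' hne
      rw [htail_nil] at this
      simp at this
    rw [hFsub, Finset.sum_singleton]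
    have hxv1 : xv G φ v u₁ = 1 := le_antisymm hle₁ (one_le_xv G φ hadj₁.symm)
    simp [wt, hx₁, hxv1]
  · have hs2 : 2 ≤ s := by omega
    have hq : q.IsPath := hp.of_cons
    have hqlen : q.length = s - 1 := by
      have : q.length + 1 = s := hlen
      omega
    have hzt : z ∈ q.support.tail := end_mem_support_tail G q (by omega)
    have hnodupq : q.support.Nodup := hq.support_nodup
    have hzne : z ≠ u₁ := by
      rw [Walk.support_eq_cons] at hnodupq
      intro hzz
      exact (List.nodup_cons.mp hnodupq).1 (hzz ▸ hzt)
    have htail_nodup : q.support.tail.Nodup := by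
      rw [Walk.support_eq_cons] at hnodupq
      exact (List.nodup_cons.mp hnodupq).2
    set L : Finset V := q.support.tail.toFinset with hL
    have hLcard : L.card = s - 1 := by
      rw [hL, List.toFinset_card_of_nodup htail_nodup, List.length_tail, q.length_support,
        hqlen]
      omega
    have hFsub2 : ∀ u' ∈ F, u' = u₁ ∨ u' ∈ L := by
      intro u' hu'
      rcases eq_or_ne u' u₁ with he | hne
      · exact Or.inl he
      · exact Or.inr (by rw [hL, List.mem_toFinset]; exact hmem u' hu' hne)
    have hzL : z ∈ L := by rw [hL, List.mem_toFinset]; exact hzt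
    by_cases hzF : z ∈ F
    · have hwz : wt G φ z v = 1 := by
        obtain ⟨hadjz, hxz, hlez⟩ := hFfacts z hzF
        have hgtlab : φ s(v, u₁) < φ s(z, v) := by
          rw [Sym2.eq_swap (a := v) (b := u₁)]
          exact hglt z hzF hzne
        have hgz := le_xv_of_dw G φ (dw_last G φ h q hp hc hadjz hgtlab)
        rw [hlen] at hgz
        have hxvz : xv G φ v z = s := le_antisymm hlez hgz
        simp [wt, hxz, hxvz]
      rw [← Finset.add_sum_erase F _ hzF, hwz]
      have hsub3 : F.erase z ⊆ insert u₁ (L.erase z) := by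
        intro u' hu'
        obtain ⟨hne_z, hu'F⟩ := Finset.mem_erase.mp hu'
        rcases hFsub2 u' hu'F with he | hmem'
        · simp [he]
        · exact Finset.mem_insert.mpr (Or.inr (Finset.mem_erase.mpr ⟨hne_z, hmem'⟩))
      have hcard : (F.erase z).card ≤ s - 1 := by
        calc (F.erase z).card ≤ (insert u₁ (L.erase z)).card := Finset.card_le_card hsub3
          _ ≤ (L.erase z).card + 1 := Finset.card_insert_le _ _
          _ = (s - 2) + 1 := by rw [Finset.card_erase_of_mem hzL, hLcard]; omega
          _ ≤ s - 1 := by omega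
      have hsum2 : ∑ u ∈ F.erase z, wt G φ u v ≤ (F.erase z).card • 2 :=
        Finset.sum_le_card_nsmul _ _ 2 (fun u _ => wt_le_two G φ u v)
      rw [smul_eq_mul] at hsum2
      omega
    · have hsub3 : F ⊆ insert u₁ (L.erase z) := by
        intro u' hu'
        rcases hFsub2 u' hu' with he | hmem'
        · simp [he]
        · refine Finset.mem_insert.mpr (Or.inr (Finset.mem_erase.mpr ⟨?_, hmem'⟩))
          rintro rfl
          exact hzF hu'
      have hcard : F.card ≤ s - 1 := by
        calc F.card ≤ (insert u₁ (L.erase z)).card := Finset.card_le_card hsub3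
          _ ≤ (L.erase z).card + 1 := Finset.card_insert_le _ _
          _ = (s - 2) + 1 := by rw [Finset.card_erase_of_mem hzL, hLcard]; omega
          _ ≤ s - 1 := by omega
      have hsum2 : ∑ u ∈ F, wt G φ u v ≤ F.card • 2 :=
        Finset.sum_le_card_nsmul _ _ 2 (fun u _ => wt_le_two G φ u v)
      rw [smul_eq_mul] at hsum2
      omega

lemma sum_odd (k : ℕ) : ∑ s ∈ Finset.Icc 1 k, (2 * s - 1) = k ^ 2 := by
  induction k with
  | zero => simp
  | succ k ih =>
      rw [Finset.sum_Icc_succ_top (by omega), ih]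
      have : (k + 1) ^ 2 = k ^ 2 + 2 * k + 1 := by ring
      omega

lemma vertex_bound [DecidableRel G.Adj] (hinj : Set.InjOn φ G.edgeSet) (v : V) :
    ∑ u ∈ G.neighborFinset v, wt G φ u v ≤ (psi G φ) ^ 2 := by
  classical
  have hmap : ∀ u ∈ G.neighborFinset v, xv G φ u v ∈ Finset.Icc 1 (psi G φ) := by
    intro u hu
    rw [mem_neighborFinset] at hu
    exact Finset.mem_Icc.mpr ⟨one_le_xv G φ hu, xv_le_psi G φ hu⟩
  rw [← Finset.sum_fiberwise_of_maps_to hmap]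
  calc ∑ s ∈ Finset.Icc 1 (psi G φ),
        ∑ u ∈ (G.neighborFinset v).filter (fun u => xv G φ u v = s), wt G φ u v
      ≤ ∑ s ∈ Finset.Icc 1 (psi G φ), (2 * s - 1) := by
        refine Finset.sum_le_sum ?_
        intro s hsmem
        exact fiber G φ hinj v s (Finset.mem_Icc.mp hsmem).1
    _ = (psi G φ) ^ 2 := sum_odd _

lemma key [DecidableRel G.Adj] (hinj : Set.InjOn φ G.edgeSet) :
    2 * G.edgeFinset.card ≤ Fintype.card V * (psi G φ) ^ 2 := by
  classical
  have hswap : ∑ v, ∑ u ∈ G.neighborFinset v, wt G φ v u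
      = ∑ v, ∑ u ∈ G.neighborFinset v, wt G φ u v := by
    refine Finset.sum_comm' ?_
    intro x y
    simp only [Finset.mem_univ, true_and, and_true, mem_neighborFinset]
    exact G.adj_comm x y
  have htot : ∑ v, ∑ u ∈ G.neighborFinset v, (wt G φ u v + wt G φ v u)
      = 4 * G.edgeFinset.card := by
    have : ∀ v : V, ∑ u ∈ G.neighborFinset v, (wt G φ u v + wt G φ v u)
        = 2 * G.degree v := by
      intro v
      rw [Finset.sum_congr rfl (fun u _ => wt_add_wt G φ u v)]
      rw [Finset.sum_const, G.card_neighborFinset_eq_degree, smul_eq_mul, mul_comm]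
    rw [Finset.sum_congr rfl (fun v _ => this v), ← Finset.mul_sum,
      G.sum_degrees_eq_twice_card_edges]
    ring
  have hhalf : ∑ v, ∑ u ∈ G.neighborFinset v, wt G φ u v = 2 * G.edgeFinset.card := by
    have h2 : ∑ v, ∑ u ∈ G.neighborFinset v, (wt G φ u v + wt G φ v u)
        = 2 * ∑ v, ∑ u ∈ G.neighborFinset v, wt G φ u v := by
      rw [two_mul]
      nth_rewrite 2 [← hswap]
      rw [← Finset.sum_add_distrib]
      exact Finset.sum_congr rfl fun x _ => Finset.sum_add_distrib
    omega
  rw [← hhalf]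
  have hle : ∑ v, ∑ u ∈ G.neighborFinset v, wt G φ u v ≤ ∑ _v : V, (psi G φ) ^ 2 :=
    Finset.sum_le_sum fun v _ => vertex_bound G φ hinj v
  simpa using hle

lemma exists_ordering (G : SimpleGraph V) [Fintype V] :
    ∃ φ : Sym2 V → ℕ, IsEdgeOrdering G φ := by
  classical
  have hfin : G.edgeSet.Finite := Set.toFinite _
  set m := G.edgeSet.ncard with hm
  set Fs := hfin.toFinset with hFs
  have hcard : Fs.card = (Finset.Icc 1 m).card := by
    rw [hFs, Nat.card_Icc, hm, Set.ncard_eq_toFinset_card _ hfin]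
    omega
  have e := Finset.equivOfCardEq hcard
  refine ⟨fun x => if h : x ∈ Fs then (e ⟨x, h⟩ : ℕ) else 0, ?_, ?_, ?_⟩
  · intro x hx
    have hx' : x ∈ Fs := hfin.mem_toFinset.mpr hx
    simp only [dif_pos hx']
    exact Set.mem_Icc.mpr (Finset.mem_Icc.mp (e ⟨x, hx'⟩).2)
  · intro x hx y hy hxy
    have hx' : x ∈ Fs := hfin.mem_toFinset.mpr hx
    have hy' : y ∈ Fs := hfin.mem_toFinset.mpr hy
    simp only [dif_pos hx', dif_pos hy'] at hxy
    have : e ⟨x, hx'⟩ = e ⟨y, hy'⟩ := Subtype.ext hxy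
    have := e.injective this
    exact congrArg Subtype.val this
  · intro y hy
    have hy' : y ∈ Finset.Icc 1 m := Finset.mem_Icc.mpr (Set.mem_Icc.mp hy)
    set a := e.symm ⟨y, hy'⟩ with ha
    refine ⟨a.1, hfin.mem_toFinset.mp a.2, ?_⟩
    simp only [dif_pos a.2]
    have : e ⟨a.1, a.2⟩ = ⟨y, hy'⟩ := by
      rw [ha]
      simp
    rw [this]

end IncAux

/-- Every graph with average degree `d` satisfies `f(G) ≥ √d`. -/
theorem incf_ge_sqrt_avg_degree (G : SimpleGraph V) :
    Real.sqrt (2 * (G.edgeSet.ncard : ℝ) / (Fintype.card V : ℝ)) ≤ (incf G : ℝ) := by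
  classical
  obtain ⟨φ₀, hφ₀⟩ := IncAux.exists_ordering G
  have hne : {m | ∃ φ : Sym2 V → ℕ, IsEdgeOrdering G φ ∧ psi G φ = m}.Nonempty :=
    ⟨psi G φ₀, φ₀, hφ₀, rfl⟩
  obtain ⟨φm, hφm, hpsim⟩ := Nat.sInf_mem hne
  have hkey : 2 * G.edgeSet.ncard ≤ Fintype.card V * (incf G) ^ 2 := by
    have h1 : G.edgeSet.ncard = G.edgeFinset.card := Set.ncard_eq_toFinset_card' _
    have h2 : incf G = psi G φm := hpsim.symm
    rw [h1, h2]
    exact IncAux.key G φm hφm.injOn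
  rcases Nat.eq_zero_or_pos (Fintype.card V) with hn | hn
  · have hm0 : G.edgeSet.ncard = 0 := by
      rw [hn] at hkey
      omega
    rw [hm0]
    push_cast
    rw [mul_zero, zero_div, Real.sqrt_zero]
    exact Nat.cast_nonneg _
  · have hnpos : (0 : ℝ) < (Fintype.card V : ℝ) := by
      exact_mod_cast hn
    have h2 : 2 * (G.edgeSet.ncard : ℝ) / (Fintype.card V : ℝ) ≤ ((incf G : ℝ)) ^ 2 := by
      rw [div_le_iff₀ hnpos]
      have : ((2 * G.edgeSet.ncard : ℕ) : ℝ) ≤ ((Fintype.card V * (incf G) ^ 2 : ℕ) : ℝ) := by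
        exact_mod_cast hkey
      push_cast at this
      linarith
    calc Real.sqrt (2 * (G.edgeSet.ncard : ℝ) / (Fintype.card V : ℝ))
        ≤ Real.sqrt (((incf G : ℝ)) ^ 2) := Real.sqrt_le_sqrt h2
      _ = (incf G : ℝ) := Real.sqrt_sq (Nat.cast_nonneg _)
end

section
/- For all positive integers k and d, any set of at most k vertices in the d-dimensional hypercube Q_d induces at most (k log₂ k)/2 edges. -/
/-- The `d`-dimensional hypercube: vertices are `Fin d → Bool`, adjacent iff they
differ in exactly one coordinate. -/
def cubeGraph (d : ℕ) : SimpleGraph (Fin d → Bool) where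
  Adj x y := ∃! i, x i ≠ y i
  symm := by
    constructor
    rintro x y ⟨i, hi, hu⟩
    exact ⟨i, hi.symm, fun j hj => hu j hj.symm⟩
  loopless := by
    constructor
    rintro x ⟨i, hi, -⟩
    exact hi rfl

open Finset

/-- induced subgraph on S as a graph on the whole vertex set -/
def indG (d : ℕ) (S : Finset (Fin d → Bool)) : SimpleGraph (Fin d → Bool) where
  Adj x y := (cubeGraph d).Adj x y ∧ x ∈ S ∧ y ∈ S
  symm := ⟨fun x y ⟨h, hx, hy⟩ => ⟨h.symm, hy, hx⟩⟩
  loopless := ⟨fun x ⟨h, _⟩ => (cubeGraph d).loopless.irrefl x h⟩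

lemma edgeSet_indG (d : ℕ) (S : Finset (Fin d → Bool)) :
    (indG d S).edgeSet = {e ∈ (cubeGraph d).edgeSet | ∀ v ∈ e, v ∈ S} := by
  ext e
  induction e using Sym2.ind with
  | _ x y =>
    simp only [SimpleGraph.mem_edgeSet, Set.mem_setOf_eq, Sym2.mem_iff, indG]
    constructor
    · rintro ⟨h, hx, hy⟩
      exact ⟨h, by rintro v (rfl | rfl) <;> assumption⟩
    · rintro ⟨h, hv⟩
      exact ⟨h, hv x (Or.inl rfl), hv y (Or.inr rfl)⟩

open Classical in
noncomputable def eC (d : ℕ) (S : Finset (Fin d → Bool)) : ℕ :=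
  {e ∈ (cubeGraph d).edgeSet | ∀ v ∈ e, v ∈ S}.ncard

open Classical in
lemma two_mul_eC (d : ℕ) (S : Finset (Fin d → Bool)) :
    2 * eC d S = ((S ×ˢ S).filter fun p => (cubeGraph d).Adj p.1 p.2).card := by
  have h1 : eC d S = (indG d S).edgeFinset.card := by
    rw [eC, ← edgeSet_indG, Set.ncard_eq_toFinset_card']
    congr 1
  rw [h1, SimpleGraph.two_mul_card_edgeFinset]
  congr 1
  ext ⟨x, y⟩
  simp only [mem_filter, Finset.mem_univ, true_and, mem_product]
  simp only [indG]
  tauto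

lemma adj_of_last_eq {d : ℕ} {x y : Fin (d+1) → Bool} (h : x (Fin.last d) = y (Fin.last d)) :
    (cubeGraph (d+1)).Adj x y ↔ (cubeGraph d).Adj (Fin.init x) (Fin.init y) := by
  constructor
  · rintro ⟨i, hi, hu⟩
    have hne : i ≠ Fin.last d := by rintro rfl; exact hi h
    obtain ⟨j, rfl⟩ := Fin.exists_castSucc_eq.mpr hne
    refine ⟨j, hi, fun j' hj' => ?_⟩
    exact Fin.castSucc_injective _ (hu _ hj')
  · rintro ⟨j, hj, hu⟩
    refine ⟨j.castSucc, hj, fun i hi => ?_⟩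
    have hne : i ≠ Fin.last d := by rintro rfl; exact hi h
    obtain ⟨j', rfl⟩ := Fin.exists_castSucc_eq.mpr hne
    exact congrArg Fin.castSucc (hu _ hi)

lemma init_eq_of_adj_last_ne {d : ℕ} {x y : Fin (d+1) → Bool}
    (h : x (Fin.last d) ≠ y (Fin.last d)) (hadj : (cubeGraph (d+1)).Adj x y) :
    Fin.init x = Fin.init y := by
  obtain ⟨i, hi, hu⟩ := hadj
  have hlast : Fin.last d = i := hu _ h
  funext j
  by_contra hj
  have := hu _ hj
  rw [← hlast] at this
  exact (Fin.castSucc_lt_last j).ne this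

lemma eq_of_init_eq {d : ℕ} {x y : Fin (d+1) → Bool} (h1 : Fin.init x = Fin.init y)
    (h2 : x (Fin.last d) = y (Fin.last d)) : x = y := by
  rw [← Fin.snoc_init_self x, ← Fin.snoc_init_self y, h1, h2]

noncomputable def proj (d : ℕ) (S : Finset (Fin (d+1) → Bool)) (b : Bool) : Finset (Fin d → Bool) :=
  (S.filter fun g => g (Fin.last d) = b).image Fin.init

lemma card_proj (d : ℕ) (S : Finset (Fin (d+1) → Bool)) (b : Bool) :
    (proj d S b).card = (S.filter fun g => g (Fin.last d) = b).card := by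
  apply Finset.card_image_of_injOn
  intro x hx y hy hxy
  simp only [Finset.coe_filter, Set.mem_setOf_eq] at hx hy
  exact eq_of_init_eq hxy (hx.2.trans hy.2.symm)

lemma card_proj_sum (d : ℕ) (S : Finset (Fin (d+1) → Bool)) :
    (proj d S false).card + (proj d S true).card = S.card := by
  rw [card_proj, card_proj]
  have h := Finset.card_filter_add_card_filter_not (s := S)
    (p := fun g => g (Fin.last d) = false)
  simp only [Bool.not_eq_false] at h
  exact h

lemma pairs_le (d : ℕ) (S : Finset (Fin (d+1) → Bool)) :
    2 * eC (d+1) S ≤ 2 * eC d (proj d S false) + 2 * eC d (proj d S true)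
      + 2 * ((proj d S false) ∩ (proj d S true)).card := by
  classical
  rw [two_mul_eC, two_mul_eC, two_mul_eC]
  set P := ((S ×ˢ S).filter fun p => (cubeGraph (d+1)).Adj p.1 p.2) with hP
  set Qf := P.filter (fun p => p.1 (Fin.last d) = false ∧ p.2 (Fin.last d) = false) with hQf
  set Qt := P.filter (fun p => p.1 (Fin.last d) = true ∧ p.2 (Fin.last d) = true) with hQt
  set R := P.filter (fun p => p.1 (Fin.last d) ≠ p.2 (Fin.last d)) with hR
  have hsub : P ⊆ Qf ∪ Qt ∪ R := by
    intro p hp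
    simp only [hQf, hQt, hR, Finset.mem_union, mem_filter]
    rcases Bool.eq_false_or_eq_true (p.1 (Fin.last d)) with h1 | h1 <;>
      rcases Bool.eq_false_or_eq_true (p.2 (Fin.last d)) with h2 | h2 <;>
      simp [hp, h1, h2]
  have hQ : ∀ b : Bool, (P.filter (fun p => p.1 (Fin.last d) = b ∧ p.2 (Fin.last d) = b)).card ≤
      (((proj d S b) ×ˢ (proj d S b)).filter fun p => (cubeGraph d).Adj p.1 p.2).card := by
    intro b
    apply Finset.card_le_card_of_injOn (fun p : (Fin (d+1) → Bool) × (Fin (d+1) → Bool) => (Fin.init p.1, Fin.init p.2))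
    · intro p hp
      simp only [hP, Finset.mem_coe, mem_filter, Finset.mem_product] at hp
      obtain ⟨⟨⟨h1S, h2S⟩, hadj⟩, h1, h2⟩ := hp
      simp only [Finset.mem_coe, mem_filter, Finset.mem_product, proj]
      refine ⟨⟨Finset.mem_image_of_mem _ (by simp [h1S, h1]),
        Finset.mem_image_of_mem _ (by simp [h2S, h2])⟩, ?_⟩
      exact (adj_of_last_eq (h1.trans h2.symm)).mp hadj
    · intro p hp q hq hpq
      simp only [Finset.mem_coe, mem_filter] at hp hq
      obtain ⟨hpq1, hpq2⟩ := Prod.ext_iff.mp hpq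
      have e1 := eq_of_init_eq hpq1 (hp.2.1.trans hq.2.1.symm)
      have e2 := eq_of_init_eq hpq2 (hp.2.2.trans hq.2.2.symm)
      exact Prod.ext e1 e2
  have hRle : R.card ≤ 2 * ((proj d S false) ∩ (proj d S true)).card := by
    have : 2 * ((proj d S false) ∩ (proj d S true)).card
        = (((proj d S false) ∩ (proj d S true)) ×ˢ (Finset.univ : Finset Bool)).card := by
      rw [Finset.card_product, Finset.card_univ]
      simp [mul_comm]
    rw [this]
    apply Finset.card_le_card_of_injOn (fun p : (Fin (d+1) → Bool) × (Fin (d+1) → Bool) => (Fin.init p.1, p.1 (Fin.last d)))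
    · intro p hp
      simp only [hR, hP, Finset.mem_coe, mem_filter, Finset.mem_product] at hp
      obtain ⟨⟨⟨h1S, h2S⟩, hadj⟩, hne⟩ := hp
      have hinit : Fin.init p.1 = Fin.init p.2 := init_eq_of_adj_last_ne hne hadj
      simp only [Finset.mem_coe, Finset.mem_product, Finset.mem_inter, Finset.mem_univ, and_true]
      rcases Bool.eq_false_or_eq_true (p.1 (Fin.last d)) with h1 | h1
      · have h2 : p.2 (Fin.last d) = false := by
          rcases Bool.eq_false_or_eq_true (p.2 (Fin.last d)) with h2 | h2
          · exact absurd (h1.trans h2.symm) hne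
          · exact h2
        constructor
        · rw [hinit]
          exact Finset.mem_image_of_mem _ (by simp [h2S, h2])
        · exact Finset.mem_image_of_mem _ (by simp [h1S, h1])
      · have h2 : p.2 (Fin.last d) = true := by
          rcases Bool.eq_false_or_eq_true (p.2 (Fin.last d)) with h2 | h2
          · exact h2
          · exact absurd (h1.trans h2.symm) hne
        constructor
        · exact Finset.mem_image_of_mem _ (by simp [h1S, h1])
        · rw [hinit]
          exact Finset.mem_image_of_mem _ (by simp [h2S, h2])
    · intro p hp q hq hpq
      simp only [hR, hP, Finset.mem_coe, mem_filter] at hp hq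
      obtain ⟨hpq1, hpq2⟩ := Prod.ext_iff.mp hpq
      have e1 : p.1 = q.1 := eq_of_init_eq hpq1 hpq2
      have i1 : Fin.init p.1 = Fin.init p.2 := init_eq_of_adj_last_ne hp.2 hp.1.2
      have i2 : Fin.init q.1 = Fin.init q.2 := init_eq_of_adj_last_ne hq.2 hq.1.2
      have e2 : p.2 = q.2 := by
        apply eq_of_init_eq (by rw [← i1, ← i2, e1])
        have b1 : p.2 (Fin.last d) = !(p.1 (Fin.last d)) := by
          rcases Bool.eq_false_or_eq_true (p.1 (Fin.last d)) with h | h <;>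
            rcases Bool.eq_false_or_eq_true (p.2 (Fin.last d)) with h' | h' <;>
            simp_all
        have b2 : q.2 (Fin.last d) = !(q.1 (Fin.last d)) := by
          rcases Bool.eq_false_or_eq_true (q.1 (Fin.last d)) with h | h <;>
            rcases Bool.eq_false_or_eq_true (q.2 (Fin.last d)) with h' | h' <;>
            simp_all
        rw [b1, b2, e1]
      exact Prod.ext e1 e2
  calc P.card ≤ (Qf ∪ Qt ∪ R).card := Finset.card_le_card hsub
    _ ≤ Qf.card + Qt.card + R.card := le_trans (Finset.card_union_le _ _)
        (by gcongr; exact Finset.card_union_le _ _)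
    _ ≤ _ := by
        have h1 := hQ false
        have h2 := hQ true
        rw [← hQf] at h1
        rw [← hQt] at h2
        omega

lemma logb_one_add {t : ℝ} (ht : 0 < t) (ht1 : t ≤ 1) : t ≤ Real.logb 2 (1 + t) := by
  have hexp : Real.exp (t * Real.log 2) ≤ 1 + t := by
    have hc := convexOn_exp.2 (Set.mem_univ (0:ℝ)) (Set.mem_univ (Real.log 2))
      (by linarith : (0:ℝ) ≤ 1 - t) ht.le (by ring)
    simp only [smul_eq_mul, mul_zero, zero_add, Real.exp_zero, mul_one,
      Real.exp_log two_pos] at hc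
    calc Real.exp (t * Real.log 2) ≤ (1 - t) + t * 2 := hc
      _ = 1 + t := by ring
  have hlog : t * Real.log 2 ≤ Real.log (1 + t) :=
    (Real.le_log_iff_exp_le (by linarith)).mpr hexp
  rw [Real.logb, le_div_iff₀ (Real.log_pos one_lt_two)]
  linarith

lemma logb_key {a b : ℕ} (ha : 1 ≤ a) (hab : a ≤ b) :
    (a : ℝ) * Real.logb 2 a + b * Real.logb 2 b + 2 * a
      ≤ (a + b) * Real.logb 2 (a + b) := by
  have hA : (1:ℝ) ≤ a := by exact_mod_cast ha
  have hB : (a:ℝ) ≤ b := by exact_mod_cast hab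
  have hA0 : (0:ℝ) < a := by linarith
  have hB0 : (0:ℝ) < b := by linarith
  have h1 : (a:ℝ) * Real.logb 2 a + a ≤ a * Real.logb 2 (a + b) := by
    have : Real.logb 2 (2 * a) ≤ Real.logb 2 (a + b) :=
      Real.logb_le_logb_of_le one_lt_two (by positivity) (by linarith)
    rw [Real.logb_mul two_ne_zero (by positivity),
      Real.logb_self_eq_one one_lt_two] at this
    nlinarith
  have h2 : (b:ℝ) * Real.logb 2 b + a ≤ b * Real.logb 2 (a + b) := by
    set t : ℝ := a / b with htdef
    have ht : 0 < t := by positivity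
    have ht1 : t ≤ 1 := by rw [htdef, div_le_one hB0]; exact hB
    have hsplit : (a : ℝ) + b = b * (1 + t) := by
      rw [htdef, mul_add, mul_one, mul_comm (b:ℝ) _, div_mul_cancel₀ _ hB0.ne']
      ring
    have := logb_one_add ht ht1
    have hlb : Real.logb 2 ((a:ℝ) + b) = Real.logb 2 b + Real.logb 2 (1 + t) := by
      rw [hsplit, Real.logb_mul (by positivity) (by positivity)]
    rw [hlb]
    have : (b:ℝ) * t ≤ b * Real.logb 2 (1 + t) := by
      apply mul_le_mul_of_nonneg_left this hB0.le
    have hbt : (b:ℝ) * t = a := by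
      rw [htdef, mul_comm (b:ℝ) _, div_mul_cancel₀ _ hB0.ne']
    nlinarith
  push_cast
  nlinarith

lemma rhs_nonneg (n : ℕ) : 0 ≤ (n : ℝ) * Real.logb 2 n / 2 := by
  rcases Nat.eq_zero_or_pos n with rfl | hn
  · simp
  · have h1 : (1:ℝ) ≤ n := by exact_mod_cast hn
    have := Real.logb_nonneg one_lt_two h1
    positivity

lemma combine {a b m e0 e1 : ℕ} (hma : m ≤ a) (hmb : m ≤ b)
    (h0 : (e0 : ℝ) ≤ a * Real.logb 2 a / 2) (h1 : (e1 : ℝ) ≤ b * Real.logb 2 b / 2) :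
    ((e0 + e1 + m : ℕ) : ℝ) ≤ ((a + b : ℕ) : ℝ) * Real.logb 2 ((a + b : ℕ) : ℝ) / 2 := by
  -- wlog a ≤ b
  rcases le_total a b with hab | hab
  · rcases Nat.eq_zero_or_pos a with rfl | ha
    · interval_cases m
      have he0 : e0 = 0 := by
        have : (e0:ℝ) ≤ 0 := by simpa using h0
        exact_mod_cast le_antisymm this (by positivity)
      subst he0
      simpa using h1
    · have key := logb_key ha hab
      push_cast
      push_cast at key
      have hm : (m:ℝ) ≤ a := by exact_mod_cast hma
      linarith
  · rcases Nat.eq_zero_or_pos b with rfl | hb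
    · interval_cases m
      have he1 : e1 = 0 := by
        have : (e1:ℝ) ≤ 0 := by simpa using h1
        exact_mod_cast le_antisymm this (by positivity)
      subst he1
      simpa using h0
    · have key := logb_key hb hab
      push_cast
      push_cast at key
      rw [add_comm (a:ℝ) b]
      have hm : (m:ℝ) ≤ b := by exact_mod_cast hmb
      linarith

lemma nlogn_mono {n k : ℕ} (h : n ≤ k) :
    (n : ℝ) * Real.logb 2 n / 2 ≤ (k : ℝ) * Real.logb 2 k / 2 := by
  rcases Nat.eq_zero_or_pos n with rfl | hn
  · simpa using rhs_nonneg k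
  · have h1 : (1:ℝ) ≤ n := by exact_mod_cast hn
    have hnk : (n:ℝ) ≤ k := by exact_mod_cast h
    have hlog := Real.logb_le_logb_of_le one_lt_two (by positivity) hnk
    have hln := Real.logb_nonneg one_lt_two h1
    have : (n:ℝ) * Real.logb 2 n ≤ k * Real.logb 2 k := by nlinarith
    linarith

lemma eC_le : ∀ (d : ℕ) (S : Finset (Fin d → Bool)),
    (eC d S : ℝ) ≤ S.card * Real.logb 2 S.card / 2 := by
  intro d
  induction d with
  | zero =>
    intro S
    have hE : eC 0 S = 0 := by
      rw [eC]
      convert Set.ncard_empty (Sym2 (Fin 0 → Bool))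
      ext e
      induction e using Sym2.ind with
      | _ x y =>
        simp only [Set.mem_setOf_eq, Set.mem_empty_iff_false, iff_false, not_and,
          SimpleGraph.mem_edgeSet]
        rintro ⟨i, -, -⟩
        exact i.elim0
    rw [hE]
    simpa using rhs_nonneg S.card
  | succ d ih =>
    intro S
    have hp := pairs_le d S
    have hstep : eC (d+1) S ≤ eC d (proj d S false) + eC d (proj d S true)
        + ((proj d S false) ∩ (proj d S true)).card := by omega
    have hcomb := combine (a := (proj d S false).card) (b := (proj d S true).card)
      (Finset.card_le_card Finset.inter_subset_left)
      (Finset.card_le_card Finset.inter_subset_right)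
      (ih (proj d S false)) (ih (proj d S true))
    have hcard := card_proj_sum d S
    calc (eC (d+1) S : ℝ)
        ≤ ((eC d (proj d S false) + eC d (proj d S true)
            + ((proj d S false) ∩ (proj d S true)).card : ℕ) : ℝ) := by exact_mod_cast hstep
      _ ≤ (((proj d S false).card + (proj d S true).card : ℕ) : ℝ)
            * Real.logb 2 (((proj d S false).card + (proj d S true).card : ℕ) : ℝ) / 2 := hcomb
      _ = S.card * Real.logb 2 S.card / 2 := by rw [hcard]

/-- Any set of at most `k` vertices of the `d`-dimensional hypercube induces at most
`(k log₂ k)/2` edges. -/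
theorem cube_induced_edges_le (k d : ℕ) (hk : 0 < k) (hd : 0 < d)
    (S : Finset (Fin d → Bool)) (hS : S.card ≤ k) :
    ({e ∈ (cubeGraph d).edgeSet | ∀ v ∈ e, v ∈ S}.ncard : ℝ) ≤
      k * Real.logb 2 k / 2 := by
  have h1 : ({e ∈ (cubeGraph d).edgeSet | ∀ v ∈ e, v ∈ S}.ncard : ℝ) = (eC d S : ℝ) := rfl
  rw [h1]
  exact le_trans (eC_le d S) (nlogn_mono hS)
end

section
/- Let G be a finite simple graph on n vertices with an edge-ordering φ admitting no increasing path of length k, and let P_1,...,P_n be the paths traversed by the pedestrians in the pedestrian algorithm, with V_i the vertex set of P_i, E_i its edge set, and U_i the edge set induced by V_i. Then |E(G)| ≤ Σ_{i=1}^n (|U_i| − |E_i|/2). -/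
open scoped Classical

variable {V : Type*} [Fintype V]

/-- The pedestrians at `u` and `v` may swap: neither would move to a vertex it has
already visited.  `st p` is the (reversed) list of vertices visited by pedestrian `p`,
whose head is its current position. -/
def SwapCond (u v : V) (st : V → List V) : Prop :=
  ∀ p : V, ((st p).head? = some u → v ∉ st p) ∧ ((st p).head? = some v → u ∉ st p)

/-- One step of the pedestrian algorithm, processing the edge `{u, v}`. -/
noncomputable def pedStep (u v : V) (st : V → List V) : V → List V := fun p =>
  if SwapCond u v st then
    if (st p).head? = some u then v :: st p
    else if (st p).head? = some v then u :: st p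
    else st p
  else st p

/-- Run the pedestrian algorithm on the list of edges `L` (listed in increasing order
of the edge-ordering), starting with pedestrian `p` on vertex `p`. -/
noncomputable def pedRun (L : List (V × V)) : V → List V :=
  L.foldl (fun st uv => pedStep uv.1 uv.2 st) (fun v => [v])

/-- `L` lists the edges of `G`, each exactly once; the corresponding edge-ordering
assigns labels according to position in `L`. -/
def IsEdgeListOf (G : SimpleGraph V) (L : List (V × V)) : Prop :=
  (∀ uv ∈ L, G.Adj uv.1 uv.2) ∧ (L.map fun uv => s(uv.1, uv.2)).Nodup ∧
    {e | e ∈ L.map fun uv => s(uv.1, uv.2)} = G.edgeSet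

/-- Under the edge-ordering given by the list `L`, `G` has no increasing path of
length `k`: a path is increasing iff its edges occur as a sublist of `L`. -/
def NoIncPathOfLen (G : SimpleGraph V) (L : List (V × V)) (k : ℕ) : Prop :=
  ∀ (u v : V) (p : G.Walk u v), p.IsPath →
    p.edges.Sublist (L.map fun uv => s(uv.1, uv.2)) → p.length < k

private lemma ped_head?_eq_headI {α : Type*} [Inhabited α] {l : List α} (h : l ≠ []) :
    l.head? = some l.headI := by
  cases l <;> simp_all

private lemma ped_headI_mem {α : Type*} [Inhabited α] {l : List α} (h : l ≠ []) : l.headI ∈ l := by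
  cases l <;> simp_all

private lemma mem_pedStep {u v : V} {st : V → List V} {p x : V} (hx : x ∈ st p) :
    x ∈ pedStep u v st p := by
  unfold pedStep
  split_ifs <;> simp [hx]

private lemma mem_pedFoldl {x p : V} :
    ∀ (M : List (V × V)) (st : V → List V), x ∈ st p →
      x ∈ (M.foldl (fun s uv => pedStep uv.1 uv.2 s) st) p
  | [], _, h => h
  | uv :: M, st, h => mem_pedFoldl M (pedStep uv.1 uv.2 st) (mem_pedStep h)

/-- Number of pedestrians whose visited set contains both `u` and `v`. -/
noncomputable def pedCnt (st : V → List V) (u v : V) : ℕ :=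
  (Finset.univ.filter fun p : V => u ∈ st p ∧ v ∈ st p).card

/-- The key counting invariant of the pedestrian algorithm. -/
private lemma ped_main [Inhabited V] :
    ∀ (L : List (V × V)) (st : V → List V),
      (∀ uv ∈ L, uv.1 ≠ uv.2) → (∀ p, st p ≠ []) →
      (Function.Injective fun p => (st p).headI) →
      2 * L.length + ∑ p : V, ((L.foldl (fun s uv => pedStep uv.1 uv.2 s) st) p).length ≤
        2 * (L.map fun uv =>
            pedCnt (L.foldl (fun s uv => pedStep uv.1 uv.2 s) st) uv.1 uv.2).sum +
          ∑ p : V, (st p).length := by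
  intro L
  induction L with
  | nil => intro st _ _ _; simp
  | cons uv L' ih =>
    intro st hne hne' hinj
    obtain ⟨u, v⟩ := uv
    have huv : u ≠ v := hne (u, v) (List.mem_cons_self)
    set st1 := pedStep u v st with hst1
    have hfold : ((u, v) :: L').foldl (fun s uv => pedStep uv.1 uv.2 s) st
        = L'.foldl (fun s uv => pedStep uv.1 uv.2 s) st1 := rfl
    set stF := L'.foldl (fun s uv => pedStep uv.1 uv.2 s) st1 with hstF
    by_cases hc : SwapCond u v st
    · -- a swap happens
      have hbij : Function.Bijective fun p => (st p).headI :=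
        Finite.injective_iff_bijective.mp hinj
      obtain ⟨p0, hp0'⟩ := hbij.2 u
      obtain ⟨q0, hq0'⟩ := hbij.2 v
      have hp0 : (st p0).headI = u := hp0'
      have hq0 : (st q0).headI = v := hq0'
      have hpq : p0 ≠ q0 := by
        intro h; rw [h, hq0] at hp0; exact huv hp0.symm
      have hstep : ∀ r, st1 r = if (st r).headI = u then v :: st r
          else if (st r).headI = v then u :: st r else st r := by
        intro r
        simp only [hst1, pedStep, if_pos hc, ped_head?_eq_headI (hne' r), Option.some_inj]
      -- membership facts
      have hup0 : u ∈ st p0 := by rw [← hp0]; exact ped_headI_mem (hne' p0)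
      have hvp0 : v ∈ st1 p0 := by rw [hstep p0, if_pos hp0]; exact List.mem_cons_self
      have hup0' : u ∈ st1 p0 := mem_pedStep hup0
      have hvq0 : v ∈ st q0 := by rw [← hq0]; exact ped_headI_mem (hne' q0)
      have huq0 : u ∈ st1 q0 := by
        rw [hstep q0, if_neg (by rw [hq0]; exact fun h => huv h.symm), if_pos hq0]
        exact List.mem_cons_self
      have hvq0' : v ∈ st1 q0 := mem_pedStep hvq0
      have hcard : 2 ≤ pedCnt stF u v := by
        have h1 : p0 ∈ Finset.univ.filter fun p : V => u ∈ stF p ∧ v ∈ stF p := by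
          simp only [Finset.mem_filter, Finset.mem_univ, true_and]
          exact ⟨mem_pedFoldl L' st1 hup0', mem_pedFoldl L' st1 hvp0⟩
        have h2 : q0 ∈ Finset.univ.filter fun p : V => u ∈ stF p ∧ v ∈ stF p := by
          simp only [Finset.mem_filter, Finset.mem_univ, true_and]
          exact ⟨mem_pedFoldl L' st1 huq0, mem_pedFoldl L' st1 hvq0'⟩
        exact Finset.one_lt_card.mpr ⟨p0, h1, q0, h2, hpq⟩
      -- new invariants
      have hne1 : ∀ p, st1 p ≠ [] := by
        intro p; rw [hstep p]; split_ifs <;> simp [hne' p]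
      have hinj1 : Function.Injective fun p => (st1 p).headI := by
        have : (fun p => (st1 p).headI) =
            (Equiv.swap u v) ∘ (fun p => (st p).headI) := by
          funext p
          rw [hstep p]
          by_cases h1 : (st p).headI = u
          · simp [h1, Equiv.swap_apply_left]
          · by_cases h2 : (st p).headI = v
            · simp [h1, h2, Ne.symm huv, Equiv.swap_apply_right]
            · simp [h1, h2, Equiv.swap_apply_of_ne_of_ne h1 h2]
        rw [this]
        exact (Equiv.swap u v).injective.comp hinj
      -- length accounting
      have hlen : ∑ p : V, (st1 p).length = (∑ p : V, (st p).length) + 2 := by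
        have hpt : ∀ p, (st1 p).length = (st p).length +
            ((if (st p).headI = u then 1 else 0) + (if (st p).headI = v then 1 else 0)) := by
          intro p
          rw [hstep p]
          by_cases h1 : (st p).headI = u
          · simp [h1, huv, Ne.symm huv, h1 ▸ huv]
          · by_cases h2 : (st p).headI = v <;> simp [h1, h2, Ne.symm huv]
        rw [Finset.sum_congr rfl fun p _ => hpt p]
        rw [Finset.sum_add_distrib, Finset.sum_add_distrib]
        have e1 : ∑ p : V, (if (st p).headI = u then 1 else 0) = 1 := by
          rw [Fintype.sum_bijective _ hbij (fun p => if (st p).headI = u then 1 else 0)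
            (fun w => if w = u then 1 else 0) (fun p => rfl)]
          simp
        have e2 : ∑ p : V, (if (st p).headI = v then 1 else 0) = 1 := by
          rw [Fintype.sum_bijective _ hbij (fun p => if (st p).headI = v then 1 else 0)
            (fun w => if w = v then 1 else 0) (fun p => rfl)]
          simp
        omega
      have := ih st1 (fun uv h => hne uv (List.mem_cons_of_mem _ h)) hne1 hinj1
      simp only [hfold, ← hstF] at this ⊢
      simp only [List.length_cons, List.map_cons, List.sum_cons]
      omega
    · -- no swap
      have hid : st1 = st := by
        funext p; simp [hst1, pedStep, hc]
      have hwit : ∃ p, u ∈ st p ∧ v ∈ st p := by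
        simp only [SwapCond, not_forall] at hc
        obtain ⟨p, hp⟩ := hc
        rw [not_and_or] at hp
        rcases hp with hp | hp <;> push_neg at hp
        · exact ⟨p, List.mem_of_mem_head? (Option.mem_def.mpr hp.1), hp.2⟩
        · exact ⟨p, hp.2, List.mem_of_mem_head? (Option.mem_def.mpr hp.1)⟩
      obtain ⟨p, hup, hvp⟩ := hwit
      have hcard : 1 ≤ pedCnt stF u v := by
        have h1 : p ∈ Finset.univ.filter fun q : V => u ∈ stF q ∧ v ∈ stF q := by
          simp only [Finset.mem_filter, Finset.mem_univ, true_and]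
          rw [← hid] at hup hvp
          exact ⟨mem_pedFoldl L' st1 hup, mem_pedFoldl L' st1 hvp⟩
        exact Finset.card_pos.mpr ⟨p, h1⟩
      have := ih st (fun uv h => hne uv (List.mem_cons_of_mem _ h)) hne' hinj
      rw [hid] at hstF
      simp only [hfold, ← hstF] at this ⊢
      simp only [List.length_cons, List.map_cons, List.sum_cons]
      omega

/-- Exchange a list-sum of pedestrian counts into a sum over pedestrians. -/
private lemma ped_sum_exchange (st : V → List V) :
    ∀ (L : List (V × V)),
      (L.map fun uv => pedCnt st uv.1 uv.2).sum =
        ∑ i : V, L.countP fun uv => decide (uv.1 ∈ st i ∧ uv.2 ∈ st i)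
  | [] => by simp
  | uv :: L => by
    rw [List.map_cons, List.sum_cons, ped_sum_exchange st L]
    simp only [List.countP_cons, Finset.sum_add_distrib]
    have h : pedCnt st uv.1 uv.2 =
        ∑ i : V, (if decide (uv.1 ∈ st i ∧ uv.2 ∈ st i) = true then 1 else 0) := by
      rw [pedCnt, Finset.card_filter]
      exact Finset.sum_congr rfl fun i _ => by split_ifs <;> simp_all
    omega

/-- If the edge-ordering given by `L` admits no increasing path of length `k`, then
with `U_i` the edges induced by the vertices visited by pedestrian `i` and `E_i` the
edges traversed by pedestrian `i`, we have `|E(G)| ≤ Σᵢ (|U_i| - |E_i|/2)`. -/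
theorem edge_count_le_pedestrian_sum (G : SimpleGraph V) (L : List (V × V)) (k : ℕ)
    (hL : IsEdgeListOf G L) (hno : NoIncPathOfLen G L k) :
    (G.edgeSet.ncard : ℝ) ≤
      ∑ i : V, (({e ∈ G.edgeSet | ∀ v ∈ e, v ∈ pedRun L i}.ncard : ℝ) -
        (((pedRun L i).length : ℝ) - 1) / 2) := by
  rcases isEmpty_or_nonempty V with hV | hV
  · rw [Set.eq_empty_of_isEmpty G.edgeSet]
    simp
  · have : Inhabited V := Classical.inhabited_of_nonempty hV
    obtain ⟨hadj, hnd, hset⟩ := hL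
    set st := pedRun L with hst
    have huv : ∀ uv ∈ L, uv.1 ≠ uv.2 := fun uv h => (hadj uv h).ne
    have hmain := ped_main L (fun v => [v]) huv (by simp)
      (by intro a b h; simpa using h)
    rw [ped_sum_exchange] at hmain
    simp only [List.length_singleton, Finset.sum_const, Finset.card_univ, smul_eq_mul,
      mul_one] at hmain
    -- now hmain : 2 * L.length + ∑ p, (st p).length ≤
    --   2 * ∑ i, L.countP ... + Fintype.card V
    set n : V → ℕ := fun i => L.countP fun uv => decide (uv.1 ∈ st i ∧ uv.2 ∈ st i)
      with hn
    set Eset := L.map fun uv => s(uv.1, uv.2) with hEset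
    have h1 : G.edgeSet = ↑Eset.toFinset := by
      rw [← hset]; ext e; simp
    have hcardE : G.edgeSet.ncard = L.length := by
      rw [h1, Set.ncard_coe_finset, List.toFinset_card_of_nodup hnd, hEset,
        List.length_map]
    have hUi : ∀ i : V, {e ∈ G.edgeSet | ∀ v ∈ e, v ∈ st i}.ncard = n i := by
      intro i
      have h2 : {e ∈ G.edgeSet | ∀ v ∈ e, v ∈ st i} =
          ↑(Eset.toFinset.filter fun e => ∀ v ∈ e, v ∈ st i) := by
        ext e
        simp only [Set.mem_setOf_eq, Finset.coe_filter, h1, Finset.mem_coe]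
      rw [h2, Set.ncard_coe_finset]
      have h3 : (Eset.toFinset.filter fun e => ∀ v ∈ e, v ∈ st i) =
          (Eset.filter fun e => decide (∀ v ∈ e, v ∈ st i)).toFinset := by
        rw [List.toFinset_filter]
        congr 1
        funext e
        simp
      rw [h3, List.toFinset_card_of_nodup (hnd.filter _), ← List.countP_eq_length_filter,
        hEset, List.countP_map, hn]
      apply List.countP_congr
      intro uv _
      simp only [Function.comp_apply, decide_eq_true_eq, Sym2.ball]
    rw [hcardE]
    have hrw : ∀ i : V, ({e ∈ G.edgeSet | ∀ v ∈ e, v ∈ pedRun L i}.ncard : ℝ) -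
        (((pedRun L i).length : ℝ) - 1) / 2 =
        ((n i : ℝ) - (((st i).length : ℝ) - 1) / 2) := by
      intro i
      rw [← hst, hUi i]
    rw [Finset.sum_congr rfl fun i _ => hrw i]
    have hsum : ∑ i : V, ((n i : ℝ) - (((st i).length : ℝ) - 1) / 2) =
        (∑ i : V, (n i : ℝ)) -
          ((∑ i : V, ((st i).length : ℝ)) - (Fintype.card V : ℝ)) / 2 := by
      rw [Finset.sum_sub_distrib]
      congr 1
      rw [← Finset.sum_div]
      congr 1
      rw [Finset.sum_sub_distrib]
      simp
    rw [hsum]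
    have hmainR : 2 * (L.length : ℝ) + ∑ i : V, ((st i).length : ℝ) ≤
        2 * (∑ i : V, (n i : ℝ)) + (Fintype.card V : ℝ) := by
      have := hmain
      push_cast
      exact_mod_cast this
    linarith
end

section
/- Fix positive integers n, k ≤ n and p ∈ (0,1). The probability that the random graph G(n,p) has no increasing path of length k under some edge-ordering (i.e., f(G(n,p)) < k) is at most C(n,k)^n · (1−p)^{C(n,2) − n·C(k,2)}. -/
open SimpleGraph

variable {V : Type*} [Fintype V]

open scoped Classical

/-- The probability, in the Erdős–Rényi model `G(n,p)`, of the event `event`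
(a property of the edge set, viewed as a subset of the edge set of `K_n`). -/
noncomputable def erProb (n : ℕ) (p : ℝ) (event : Finset (Sym2 (Fin n)) → Prop) : ℝ :=
  ∑ H ∈ ((⊤ : SimpleGraph (Fin n)).edgeFinset.powerset).filter event,
    p ^ H.card * (1 - p) ^ ((⊤ : SimpleGraph (Fin n)).edgeFinset.card - H.card)


/-- Auxiliary: extend the pedestrian walks along the edge between `pos a` and `pos b`,
swapping the pedestrians at the two endpoints. -/
private noncomputable def extWalk {V : Type*} [DecidableEq V] {G : SimpleGraph V}
    (pos : V → V) (W : ∀ v, G.Walk v (pos v)) (a b : V)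
    (h : G.Adj (pos a) (pos b)) :
    ∀ v, G.Walk v ((pos ∘ (Equiv.swap a b)) v) := fun v =>
  if h1 : v = a then
    ((W a).concat h).copy h1.symm (by subst h1; simp)
  else if h2 : v = b then
    ((W b).concat h.symm).copy h2.symm (by subst h2; simp)
  else
    (W v).copy rfl (by simp [Equiv.swap_apply_of_ne_of_ne h1 h2])

private lemma extWalk_spec_a {V : Type*} [DecidableEq V] {G : SimpleGraph V}
    (pos : V → V) (W : ∀ v, G.Walk v (pos v)) (a b : V)
    (h : G.Adj (pos a) (pos b)) :
    (extWalk pos W a b h a).support = (W a).support ++ [pos b] ∧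
    (extWalk pos W a b h a).edges = (W a).edges ++ [s(pos a, pos b)] := by
  unfold extWalk
  rw [dif_pos rfl]
  simp [List.concat_eq_append]

private lemma extWalk_spec_b {V : Type*} [DecidableEq V] {G : SimpleGraph V}
    (pos : V → V) (W : ∀ v, G.Walk v (pos v)) (a b : V) (hab : a ≠ b)
    (h : G.Adj (pos a) (pos b)) :
    (extWalk pos W a b h b).support = (W b).support ++ [pos a] ∧
    (extWalk pos W a b h b).edges = (W b).edges ++ [s(pos b, pos a)] := by
  unfold extWalk
  rw [dif_neg hab.symm, dif_pos rfl]
  simp [List.concat_eq_append]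

private lemma extWalk_spec_other {V : Type*} [DecidableEq V] {G : SimpleGraph V}
    (pos : V → V) (W : ∀ v, G.Walk v (pos v)) (a b : V)
    (h : G.Adj (pos a) (pos b)) (v : V) (h1 : v ≠ a) (h2 : v ≠ b) :
    (extWalk pos W a b h v).support = (W v).support ∧
    (extWalk pos W a b h v).edges = (W v).edges := by
  unfold extWalk
  rw [dif_neg h1, dif_neg h2]
  simp

/-- The pedestrian covering lemma: if every increasing path (w.r.t. an injective labelling
whose values on edges lie in `[1, m]`) has length `< k`, then the edges of `G` can be
covered by the induced subgraphs on vertex sets `S v` of size at most `k`. -/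
private lemma cover_of_short_paths {V : Type*} [Fintype V]
    (G : SimpleGraph V) (φ : Sym2 V → ℕ) (m : ℕ)
    (hmaps : ∀ e ∈ G.edgeSet, 1 ≤ φ e ∧ φ e ≤ m)
    (hinj : Set.InjOn φ G.edgeSet)
    (k : ℕ)
    (hlen : ∀ (u w : V) (q : G.Walk u w), q.IsPath →
      List.Chain' (· < ·) (q.edges.map φ) → q.length < k) :
    ∃ S : V → Finset V, (∀ v, (S v).card ≤ k) ∧
      ∀ e ∈ G.edgeSet, ∃ v, ∀ x ∈ e, x ∈ S v := by
  classical
  have key : ∀ t : ℕ, ∃ (pos : V → V) (W : ∀ v, G.Walk v (pos v)),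
      Function.Bijective pos ∧
      (∀ v, (W v).IsPath) ∧
      (∀ v, List.Chain' (· < ·) (((W v).edges).map φ)) ∧
      (∀ v, ∀ e ∈ (W v).edges, φ e ≤ t) ∧
      (∀ e ∈ G.edgeSet, φ e ≤ t → ∃ v, ∀ x ∈ e, x ∈ (W v).support) := by
    intro t
    induction t with
    | zero =>
      refine ⟨id, fun v => SimpleGraph.Walk.nil, Function.bijective_id,
        fun v => SimpleGraph.Walk.IsPath.nil, fun _ => List.IsChain.nil, by simp, ?_⟩
      intro e he hle
      have := (hmaps e he).1
      omega
    | succ t ih =>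
      obtain ⟨pos, W, hbij, hpath, hchain, hle, hcov⟩ := ih
      by_cases hE : ∃ e ∈ G.edgeSet, φ e = t + 1
      · obtain ⟨e, heG, hφe⟩ := hE
        revert heG hφe
        refine Sym2.inductionOn e ?_
        intro x y heG hφe
        have hadj : G.Adj x y := heG
        have hxy : x ≠ y := hadj.ne
        obtain ⟨a, ha⟩ := hbij.2 x
        obtain ⟨b, hb⟩ := hbij.2 y
        have hab : a ≠ b := fun hcontr => hxy (by rw [← ha, ← hb, hcontr])
        -- a key fact reused below
        have hinj' : ∀ e' ∈ G.edgeSet, φ e' = t + 1 → e' = s(x, y) := by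
          intro e' he' h
          exact hinj he' heG (by rw [h, hφe])
        by_cases hy : y ∈ (W a).support
        · -- the edge is already inside the support of pedestrian `a`'s path
          refine ⟨pos, W, hbij, hpath, hchain,
            fun v e' he' => le_trans (hle v e' he') (Nat.le_succ t), ?_⟩
          intro e' he' hle'
          rcases Nat.lt_succ_iff_lt_or_eq.mp (Nat.lt_succ_of_le hle') with h | h
          · exact hcov e' he' (Nat.lt_succ_iff.mp h)
          · refine ⟨a, ?_⟩
            intro z hz
            rw [hinj' e' he' h, Sym2.mem_iff] at hz
            rcases hz with rfl | rfl
            · rw [← ha]; exact SimpleGraph.Walk.end_mem_support _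
            · exact hy
        by_cases hx : x ∈ (W b).support
        · refine ⟨pos, W, hbij, hpath, hchain,
            fun v e' he' => le_trans (hle v e' he') (Nat.le_succ t), ?_⟩
          intro e' he' hle'
          rcases Nat.lt_succ_iff_lt_or_eq.mp (Nat.lt_succ_of_le hle') with h | h
          · exact hcov e' he' (Nat.lt_succ_iff.mp h)
          · refine ⟨b, ?_⟩
            intro z hz
            rw [hinj' e' he' h, Sym2.mem_iff] at hz
            rcases hz with rfl | rfl
            · exact hx
            · rw [← hb]; exact SimpleGraph.Walk.end_mem_support _
        · -- extend both pedestrians' paths through the new edge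
          have hadj' : G.Adj (pos a) (pos b) := by rw [ha, hb]; exact hadj
          refine ⟨pos ∘ (Equiv.swap a b), extWalk pos W a b hadj',
            hbij.comp (Equiv.swap a b).bijective, ?_, ?_, ?_, ?_⟩
          · -- IsPath
            intro v
            rw [SimpleGraph.Walk.isPath_def]
            by_cases h1 : v = a
            · subst h1
              rw [(extWalk_spec_a pos W v b hadj').1, List.nodup_append]
              refine ⟨(hpath v).support_nodup, List.nodup_singleton _, ?_⟩
              intro z hz
              simp only [List.mem_singleton]
              intro _ hw hzz
              subst hw hzz
              rw [hb] at hz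
              exact hy hz
            by_cases h2 : v = b
            · subst h2
              rw [(extWalk_spec_b pos W a v hab hadj').1, List.nodup_append]
              refine ⟨(hpath v).support_nodup, List.nodup_singleton _, ?_⟩
              intro z hz
              simp only [List.mem_singleton]
              intro _ hw hzz
              subst hw hzz
              rw [ha] at hz
              exact hx hz
            · rw [(extWalk_spec_other pos W a b hadj' v h1 h2).1]
              exact (hpath v).support_nodup
          · -- chain
            have hlink : ∀ (w : V), List.Chain' (· < ·)
                (((W w).edges ++ [s(x, y)]).map φ) := by
              intro w
              rw [List.map_append]
              refine List.IsChain.append (hchain w) (List.isChain_singleton _) ?_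
              intro p hp q hq
              simp only [List.head?_cons, List.map_cons, List.map_nil,
                Option.mem_def, Option.some.injEq] at hq
              have hp' : p ∈ ((W w).edges).map φ := List.mem_of_mem_getLast? hp
              obtain ⟨e0, he0, rfl⟩ := List.mem_map.mp hp'
              have := hle w e0 he0
              rw [← hq, hφe]
              omega
            intro v
            by_cases h1 : v = a
            · subst h1
              rw [(extWalk_spec_a pos W v b hadj').2,
                show s(pos v, pos b) = s(x, y) by rw [ha, hb]]
              exact hlink v
            by_cases h2 : v = b
            · subst h2
              rw [(extWalk_spec_b pos W a v hab hadj').2,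
                show s(pos v, pos a) = s(x, y) by rw [ha, hb, Sym2.eq_swap]]
              exact hlink v
            · rw [(extWalk_spec_other pos W a b hadj' v h1 h2).2]
              exact hchain v
          · -- labels
            intro v e' he'
            by_cases h1 : v = a
            · subst h1
              rw [(extWalk_spec_a pos W v b hadj').2,
                show s(pos v, pos b) = s(x, y) by rw [ha, hb]] at he'
              rcases List.mem_append.mp he' with h | h
              · exact le_trans (hle v e' h) (Nat.le_succ t)
              · rw [List.mem_singleton.mp h, hφe]
            by_cases h2 : v = b
            · subst h2
              rw [(extWalk_spec_b pos W a v hab hadj').2,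
                show s(pos v, pos a) = s(x, y) by rw [ha, hb, Sym2.eq_swap]] at he'
              rcases List.mem_append.mp he' with h | h
              · exact le_trans (hle v e' h) (Nat.le_succ t)
              · rw [List.mem_singleton.mp h, hφe]
            · rw [(extWalk_spec_other pos W a b hadj' v h1 h2).2] at he'
              exact le_trans (hle v e' he') (Nat.le_succ t)
          · -- coverage
            have hmono : ∀ v, (W v).support ⊆ (extWalk pos W a b hadj' v).support := by
              intro v
              by_cases h1 : v = a
              · subst h1
                rw [(extWalk_spec_a pos W v b hadj').1]
                exact fun z hz => List.mem_append.mpr (Or.inl hz)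
              by_cases h2 : v = b
              · subst h2
                rw [(extWalk_spec_b pos W a v hab hadj').1]
                exact fun z hz => List.mem_append.mpr (Or.inl hz)
              · rw [(extWalk_spec_other pos W a b hadj' v h1 h2).1]
                exact fun z hz => hz
            intro e' he' hle'
            rcases Nat.lt_succ_iff_lt_or_eq.mp (Nat.lt_succ_of_le hle') with h | h
            · obtain ⟨v, hv⟩ := hcov e' he' (Nat.lt_succ_iff.mp h)
              exact ⟨v, fun z hz => hmono v (hv z hz)⟩
            · refine ⟨a, ?_⟩
              intro z hz
              rw [hinj' e' he' h, Sym2.mem_iff] at hz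
              rw [(extWalk_spec_a pos W a b hadj').1]
              rcases hz with rfl | rfl
              · exact List.mem_append.mpr (Or.inl (by rw [← ha]; exact SimpleGraph.Walk.end_mem_support _))
              · exact List.mem_append.mpr (Or.inr (by rw [hb]; exact List.mem_singleton.mpr rfl))
      · -- no edge with label t+1
        refine ⟨pos, W, hbij, hpath, hchain,
          fun v e' he' => le_trans (hle v e' he') (Nat.le_succ t), ?_⟩
        intro e' he' hle'
        rcases Nat.lt_succ_iff_lt_or_eq.mp (Nat.lt_succ_of_le hle') with h | h
        · exact hcov e' he' (Nat.lt_succ_iff.mp h)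
        · exact absurd ⟨e', he', h⟩ hE
  obtain ⟨pos, W, hbij, hpath, hchain, hle, hcov⟩ := key m
  refine ⟨fun v => (W v).support.toFinset, ?_, ?_⟩
  · intro v
    calc (W v).support.toFinset.card ≤ (W v).support.length := (W v).support.toFinset_card_le
    _ = (W v).length + 1 := (W v).length_support
    _ ≤ k := hlen _ _ (W v) (hpath v) (hchain v)
  · intro e he
    obtain ⟨v, hv⟩ := hcov e he (hmaps e he).2
    exact ⟨v, fun x hx => List.mem_toFinset.mpr (hv x hx)⟩

private lemma exists_edgeOrdering {V : Type*} [Fintype V] (G : SimpleGraph V) :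
    ∃ φ : Sym2 V → ℕ, IsEdgeOrdering G φ := by
  classical
  have hfin : G.edgeSet.Finite := Set.toFinite _
  set s : Finset (Sym2 V) := hfin.toFinset with hs
  have hcard : s.card = G.edgeSet.ncard := (Set.ncard_eq_toFinset_card _ hfin).symm
  have hmem : ∀ e, e ∈ s ↔ e ∈ G.edgeSet := fun e => hfin.mem_toFinset
  refine ⟨fun e => if h : e ∈ s then ((s.equivFin ⟨e, h⟩ : Fin s.card) : ℕ) + 1 else 0,
    ?_, ?_, ?_⟩
  · intro e he
    dsimp only
    rw [dif_pos ((hmem e).mpr he)]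
    constructor
    · omega
    · have := (s.equivFin ⟨e, (hmem e).mpr he⟩).2
      omega
  · intro e1 he1 e2 he2 h
    dsimp only at h
    rw [dif_pos ((hmem e1).mpr he1), dif_pos ((hmem e2).mpr he2)] at h
    have : s.equivFin ⟨e1, (hmem e1).mpr he1⟩ = s.equivFin ⟨e2, (hmem e2).mpr he2⟩ :=
      Fin.ext (by omega)
    have h2 := s.equivFin.injective this
    exact congrArg Subtype.val h2
  · intro j hj
    obtain ⟨h1, h2⟩ := Set.mem_Icc.mp hj
    have hjlt : j - 1 < s.card := by omega
    set e := s.equivFin.symm ⟨j - 1, hjlt⟩ with he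
    refine ⟨(e : Sym2 V), (hmem _).mp e.2, ?_⟩
    dsimp only
    rw [dif_pos e.2]
    have : s.equivFin ⟨(e : Sym2 V), e.2⟩ = ⟨j - 1, hjlt⟩ := by
      rw [he]
      convert s.equivFin.apply_symm_apply ⟨j - 1, hjlt⟩
    rw [this]
    simp
    omega

/-- Count of potential edges inside the union of the `g v`. -/
private lemma card_inside_le {n k : ℕ} (g : Fin n → Finset (Fin n))
    (hg : ∀ v, (g v).card = k) :
    ((((⊤ : SimpleGraph (Fin n)).edgeFinset)).filter
      (fun e => ∃ v, ∀ x ∈ e, x ∈ g v)).card ≤ n * k.choose 2 := by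
  classical
  have hsub : (((⊤ : SimpleGraph (Fin n)).edgeFinset)).filter
      (fun e => ∃ v, ∀ x ∈ e, x ∈ g v) ⊆
      Finset.univ.biUnion (fun v => (g v).sym2.filter (fun e => ¬ e.IsDiag)) := by
    intro e he
    rw [Finset.mem_filter] at he
    obtain ⟨heM, v, hv⟩ := he
    rw [Finset.mem_biUnion]
    refine ⟨v, Finset.mem_univ v, Finset.mem_filter.mpr ⟨Finset.mem_sym2_iff.mpr hv, ?_⟩⟩
    exact SimpleGraph.not_isDiag_of_mem_edgeSet _ (SimpleGraph.mem_edgeFinset.mp heM)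
  have hcard : ∀ v : Fin n, ((g v).sym2.filter (fun e => ¬ e.IsDiag)).card = k.choose 2 := by
    intro v
    have hdiag : (g v).sym2.filter (fun e => e.IsDiag) = (g v).image Sym2.diag := by
      ext z
      refine Sym2.inductionOn z (fun p q => ?_)
      simp only [Finset.mem_filter, Finset.mk_mem_sym2_iff, Finset.mem_image, Sym2.mk_isDiag_iff]
      constructor
      · rintro ⟨⟨hp, hq⟩, rfl⟩
        exact ⟨p, hp, rfl⟩
      · rintro ⟨w, hw, hwz⟩
        have h1 : p = w ∧ q = w := by
          have := hwz.symm
          rw [Sym2.diag, Sym2.eq_iff] at this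
          tauto
        obtain ⟨rfl, rfl⟩ := h1
        exact ⟨⟨hw, hw⟩, rfl⟩
    have h1 := Finset.card_filter_add_card_filter_not
      (s := (g v).sym2) (p := fun e => e.IsDiag)
    rw [hdiag, Finset.card_image_of_injective _ Sym2.diag_injective, hg v,
      Finset.card_sym2, hg v] at h1
    have h2 : (k + 1).choose 2 = k + k.choose 2 := by
      rw [Nat.choose_succ_succ, Nat.choose_one_right]
    omega
  calc _ ≤ (Finset.univ.biUnion (fun v : Fin n => (g v).sym2.filter (fun e => ¬ e.IsDiag))).card :=
        Finset.card_le_card hsub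
    _ ≤ ∑ v : Fin n, ((g v).sym2.filter (fun e => ¬ e.IsDiag)).card := Finset.card_biUnion_le
    _ = n * k.choose 2 := by
        rw [Finset.sum_congr rfl (fun v _ => hcard v)]
        simp [mul_comm]

/-- Binomial: the probability that all edges fall inside `A`. -/
private lemma sum_powerset_weight {α : Type*} [DecidableEq α] (M A : Finset α) (hA : A ⊆ M)
    (p : ℝ) :
    ∑ H ∈ A.powerset, p ^ H.card * (1 - p) ^ (M.card - H.card)
      = (1 - p) ^ (M.card - A.card) := by
  have hsum1 : ∑ H ∈ A.powerset, p ^ H.card * (1 - p) ^ (A.card - H.card) = 1 := by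
    have h := Finset.prod_add (fun _ : α => p) (fun _ : α => 1 - p) A
    have hpp : p + (1 - p) = 1 := by ring
    simp only [hpp, Finset.prod_const, one_pow] at h
    calc ∑ H ∈ A.powerset, p ^ H.card * (1 - p) ^ (A.card - H.card)
        = ∑ H ∈ A.powerset, p ^ H.card * (1 - p) ^ ((A \ H).card) :=
          Finset.sum_congr rfl (fun H hH => by
            rw [Finset.card_sdiff_of_subset (Finset.mem_powerset.mp hH)])
      _ = 1 := h.symm
  calc ∑ H ∈ A.powerset, p ^ H.card * (1 - p) ^ (M.card - H.card)
      = ∑ H ∈ A.powerset, (1 - p) ^ (M.card - A.card)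
          * (p ^ H.card * (1 - p) ^ (A.card - H.card)) := by
        refine Finset.sum_congr rfl (fun H hH => ?_)
        have h1 : H.card ≤ A.card := Finset.card_le_card (Finset.mem_powerset.mp hH)
        have h2 : A.card ≤ M.card := Finset.card_le_card hA
        have h3 : M.card - H.card = (M.card - A.card) + (A.card - H.card) := by omega
        rw [h3, pow_add]
        ring
    _ = (1 - p) ^ (M.card - A.card) := by
        rw [← Finset.mul_sum, hsum1, mul_one]

private lemma sum_biUnion_le' {α β : Type*} [DecidableEq α] (T : Finset β)
    (u : β → Finset α) (f : α → ℝ) (h0 : ∀ a, 0 ≤ f a) :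
    ∑ a ∈ T.biUnion u, f a ≤ ∑ b ∈ T, ∑ a ∈ u b, f a := by
  classical
  induction T using Finset.induction_on with
  | empty => simp
  | @insert b T' hb ih =>
    rw [Finset.biUnion_insert, Finset.sum_insert hb]
    calc ∑ a ∈ u b ∪ T'.biUnion u, f a
        ≤ ∑ a ∈ u b, f a + ∑ a ∈ T'.biUnion u, f a := by
          rw [← Finset.union_sdiff_self_eq_union, Finset.sum_union Finset.disjoint_sdiff]
          exact add_le_add le_rfl (Finset.sum_le_sum_of_subset_of_nonneg
            Finset.sdiff_subset (fun a _ _ => h0 a))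
      _ ≤ ∑ a ∈ u b, f a + ∑ b ∈ T', ∑ a ∈ u b, f a := by gcongr

/-- Union bound. -/
private lemma sum_le_biUnion_sum {α β : Type*} [DecidableEq α] (S : Finset α) (T : Finset β)
    (u : β → Finset α) (f : α → ℝ) (h0 : ∀ a, 0 ≤ f a)
    (hS : ∀ a ∈ S, ∃ b ∈ T, a ∈ u b) :
    ∑ a ∈ S, f a ≤ ∑ b ∈ T, ∑ a ∈ u b, f a := by
  classical
  calc ∑ a ∈ S, f a ≤ ∑ a ∈ T.biUnion u, f a :=
      Finset.sum_le_sum_of_subset_of_nonneg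
        (fun a ha => Finset.mem_biUnion.mpr (hS a ha)) (fun a _ _ => h0 a)
  _ ≤ ∑ b ∈ T, ∑ a ∈ u b, f a := sum_biUnion_le' T u f h0

/-- The probability that `f(G(n,p)) < k` is at most
`C(n,k)^n · (1-p)^(C(n,2) - n·C(k,2))`. -/
theorem er_incf_lt_prob_le (n k : ℕ) (hn : 0 < n) (hk : 0 < k) (hkn : k ≤ n)
    (p : ℝ) (hp0 : 0 < p) (hp1 : p < 1) :
    erProb n p (fun H => incf (SimpleGraph.fromEdgeSet (↑H : Set (Sym2 (Fin n)))) < k) ≤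
      (n.choose k : ℝ) ^ n * (1 - p) ^ ((n.choose 2 : ℝ) - n * (k.choose 2 : ℝ)) := by
  classical
  have hq0 : (0:ℝ) < 1 - p := by linarith
  set M : Finset (Sym2 (Fin n)) := (⊤ : SimpleGraph (Fin n)).edgeFinset with hM
  have hMcard : M.card = n.choose 2 := by
    rw [hM, SimpleGraph.card_edgeFinset_top_eq_card_choose_two, Fintype.card_fin]
  set Fam : Finset (Fin n → Finset (Fin n)) :=
    Fintype.piFinset (fun _ => Finset.univ.powersetCard k) with hFam
  set A : (Fin n → Finset (Fin n)) → Finset (Sym2 (Fin n)) :=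
    fun g => M.filter (fun e => ∃ v, ∀ x ∈ e, x ∈ g v) with hA
  have hw0 : ∀ H : Finset (Sym2 (Fin n)), 0 ≤ p ^ H.card * (1 - p) ^ (M.card - H.card) :=
    fun H => mul_nonneg (pow_nonneg hp0.le _) (pow_nonneg hq0.le _)
  have stepA : ∀ H : Finset (Sym2 (Fin n)), H ∈ M.powerset.filter
      (fun H : Finset (Sym2 (Fin n)) =>
        incf (SimpleGraph.fromEdgeSet (↑H : Set (Sym2 (Fin n)))) < k) →
      ∃ g ∈ Fam, H ∈ (A g).powerset := by
    intro H hH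
    rw [Finset.mem_filter, Finset.mem_powerset] at hH
    obtain ⟨hHM, hbad⟩ := hH
    set G := SimpleGraph.fromEdgeSet (↑H : Set (Sym2 (Fin n))) with hG
    have hedge : G.edgeSet = (↑H : Set (Sym2 (Fin n))) := by
      rw [hG, SimpleGraph.edgeSet_fromEdgeSet, sdiff_eq_left]
      rw [Set.disjoint_left]
      intro e he hd
      have heM : e ∈ M := hHM (Finset.mem_coe.mp he)
      exact SimpleGraph.not_isDiag_of_mem_edgeSet _ (SimpleGraph.mem_edgeFinset.mp heM) hd
    obtain ⟨φ, hφ, hψ⟩ : ∃ φ : Sym2 (Fin n) → ℕ, IsEdgeOrdering G φ ∧ psi G φ = incf G := by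
      have hne : {m | ∃ φ : Sym2 (Fin n) → ℕ, IsEdgeOrdering G φ ∧ psi G φ = m}.Nonempty := by
        obtain ⟨φ, h⟩ := exists_edgeOrdering G
        exact ⟨psi G φ, φ, h, rfl⟩
      exact Nat.sInf_mem hne
    have hψk : psi G φ < k := by rw [hψ]; exact hbad
    have hlen : ∀ (u w : Fin n) (q : G.Walk u w), q.IsPath →
        List.Chain' (· < ·) (q.edges.map φ) → q.length < k := by
      intro u w q h1 h2
      have hmem : q.length ∈ {ℓ | HasIncPath G φ ℓ} := ⟨u, w, q, h1, h2, rfl⟩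
      have hbdd : BddAbove {ℓ | HasIncPath G φ ℓ} := by
        refine ⟨Fintype.card (Fin n), ?_⟩
        rintro ℓ ⟨u', v', q', hq', -, rfl⟩
        exact hq'.length_lt.le
      exact lt_of_le_of_lt (le_csSup hbdd hmem) hψk
    obtain ⟨S, hScard, hScov⟩ := cover_of_short_paths G φ G.edgeSet.ncard
      (fun e he => Set.mem_Icc.mp (hφ.1 he)) hφ.2.1 k hlen
    have hpad : ∀ v : Fin n, ∃ T : Finset (Fin n), S v ⊆ T ∧ T.card = k := by
      intro v
      obtain ⟨T, h1, -, h3⟩ := Finset.exists_subsuperset_card_eq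
        (Finset.subset_univ (S v)) (hScard v) (by simpa using hkn)
      exact ⟨T, h1, h3⟩
    choose T hT1 hT2 using hpad
    refine ⟨T, ?_, ?_⟩
    · rw [hFam, Fintype.mem_piFinset]
      exact fun v => Finset.mem_powersetCard.mpr ⟨Finset.subset_univ _, hT2 v⟩
    · rw [Finset.mem_powerset]
      intro e he
      refine Finset.mem_filter.mpr ⟨hHM he, ?_⟩
      obtain ⟨v, hv⟩ := hScov e (by rw [hedge]; exact Finset.mem_coe.mpr he)
      exact ⟨v, fun x hx => hT1 v (hv x hx)⟩
  have hexp : ∀ g ∈ Fam, (1 - p : ℝ) ^ (M.card - (A g).card) ≤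
      (1 - p) ^ ((n.choose 2 : ℝ) - n * (k.choose 2 : ℝ)) := by
    intro g hg
    have hgcard : ∀ v, (g v).card = k := by
      rw [hFam, Fintype.mem_piFinset] at hg
      exact fun v => (Finset.mem_powersetCard.mp (hg v)).2
    have hAg : (A g).card ≤ n * k.choose 2 := card_inside_le g hgcard
    have hAM : (A g).card ≤ M.card := Finset.card_le_card (Finset.filter_subset _ _)
    have hcast : ((M.card - (A g).card : ℕ) : ℝ) = (M.card : ℝ) - ((A g).card : ℝ) :=
      Nat.cast_sub hAM
    calc (1 - p : ℝ) ^ (M.card - (A g).card)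
        = (1 - p) ^ (((M.card - (A g).card : ℕ) : ℝ)) := (Real.rpow_natCast _ _).symm
      _ ≤ (1 - p) ^ ((n.choose 2 : ℝ) - n * (k.choose 2 : ℝ)) := by
          apply Real.rpow_le_rpow_of_exponent_ge hq0 (by linarith)
          rw [hcast, hMcard]
          have hc : ((A g).card : ℝ) ≤ (n : ℝ) * (k.choose 2 : ℝ) := by exact_mod_cast hAg
          linarith
  have hFamcard : Fam.card = (n.choose k) ^ n := by
    rw [hFam, Fintype.card_piFinset]
    simp [Finset.card_powersetCard]
  calc erProb n p (fun H => incf (SimpleGraph.fromEdgeSet (↑H : Set (Sym2 (Fin n)))) < k)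
      = ∑ H ∈ M.powerset.filter
          (fun H : Finset (Sym2 (Fin n)) =>
            incf (SimpleGraph.fromEdgeSet (↑H : Set (Sym2 (Fin n)))) < k),
          p ^ H.card * (1 - p) ^ (M.card - H.card) := by
            rw [erProb, ← hM]
            refine Finset.sum_congr ?_ (fun _ _ => rfl)
            exact Finset.filter_congr_decidable _ _ _
    _ ≤ ∑ g ∈ Fam, ∑ H ∈ (A g).powerset, p ^ H.card * (1 - p) ^ (M.card - H.card) :=
        sum_le_biUnion_sum _ Fam (fun g => (A g).powerset) _ hw0 stepA
    _ = ∑ g ∈ Fam, (1 - p) ^ (M.card - (A g).card) :=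
        Finset.sum_congr rfl (fun g _ => sum_powerset_weight M (A g) (Finset.filter_subset _ _) p)
    _ ≤ ∑ g ∈ Fam, (1 - p) ^ ((n.choose 2 : ℝ) - n * (k.choose 2 : ℝ)) :=
        Finset.sum_le_sum hexp
    _ = (n.choose k : ℝ) ^ n * (1 - p) ^ ((n.choose 2 : ℝ) - n * (k.choose 2 : ℝ)) := by
        rw [Finset.sum_const, hFamcard, nsmul_eq_mul]
        push_cast
        ring
end
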